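/- arXiv:1401.4178 — 2 statements merged into one kernel-verified Lean document; each statement's English description precedes it below -/
import Mathlib

section
/- Let Γ be a bipartite graph with vertex classes U and V, both of size m, where 0 < 1/m ≪ ε ≪ ρ ≪ 1, 0 ≤ μ ≤ 1/4, and m, μm, ρm are integers. Suppose (1−μ−ε)m ≤ δ(Γ) ≤ Δ(Γ) ≤ (1−μ+ε)m. Then Γ contains a spanning (1−μ−ρ)m-regular subgraph. In particular, Γ contains at least (1−μ−ρ)m pairwise edge-disjoint perfect matchings. -/
open Finset

/-- The degree of a vertex in a (bipartite) edge set, edges given as ordered pairs. -/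
def bdeg {V : Type*} [DecidableEq V] (G : Finset (V × V)) (v : V) : ℕ :=
  (G.filter fun e => e.1 = v ∨ e.2 = v).card

/-- `M` is a perfect matching of the bipartite graph with classes `U`, `W`. -/
def IsPerfectMatching {V : Type*} [DecidableEq V] (U W : Finset V) (M : Finset (V × V)) : Prop :=
  (∀ e ∈ M, e.1 ∈ U ∧ e.2 ∈ W) ∧ (∀ v ∈ U ∪ W, bdeg M v = 1)

namespace RF

variable {V : Type*} [DecidableEq V]

/-- out-degree -/
def deg1 (G : Finset (V × V)) (u : V) : ℕ := (G.filter fun e => e.1 = u).card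
/-- in-degree -/
def deg2 (G : Finset (V × V)) (w : V) : ℕ := (G.filter fun e => e.2 = w).card

lemma bdeg_eq_deg1 {U W : Finset V} {G : Finset (V × V)} (hUW : Disjoint U W)
    (hG : ∀ e ∈ G, e.1 ∈ U ∧ e.2 ∈ W) {u : V} (hu : u ∈ U) : bdeg G u = deg1 G u := by
  unfold bdeg deg1
  congr 1
  apply Finset.filter_congr
  intro e he
  have h2 := (hG e he).2
  constructor
  · rintro (h | h)
    · exact h
    · exact absurd hu (Finset.disjoint_right.mp hUW (h ▸ h2))
  · exact Or.inl

lemma bdeg_eq_deg2 {U W : Finset V} {G : Finset (V × V)} (hUW : Disjoint U W)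
    (hG : ∀ e ∈ G, e.1 ∈ U ∧ e.2 ∈ W) {w : V} (hw : w ∈ W) : bdeg G w = deg2 G w := by
  unfold bdeg deg2
  congr 1
  apply Finset.filter_congr
  intro e he
  have h1 := (hG e he).1
  constructor
  · rintro (h | h)
    · exact absurd hw (Finset.disjoint_left.mp hUW (h ▸ h1))
    · exact h
  · exact Or.inr

lemma sum_deg1 (G : Finset (V × V)) (S : Finset V) :
    ∑ u ∈ S, deg1 G u = (G.filter fun e => e.1 ∈ S).card := by
  rw [Finset.card_eq_sum_card_fiberwise (f := Prod.fst) (s := G.filter fun e => e.1 ∈ S) (t := S)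
    (fun x hx => (Finset.mem_filter.mp hx).2)]
  apply Finset.sum_congr rfl
  intro u hu
  unfold deg1
  congr 1
  rw [Finset.filter_filter]
  apply Finset.filter_congr
  intro e _
  constructor
  · exact fun h => ⟨h ▸ hu, h⟩
  · exact fun h => h.2

lemma sum_deg2 (G : Finset (V × V)) (T : Finset V) :
    ∑ w ∈ T, deg2 G w = (G.filter fun e => e.2 ∈ T).card := by
  rw [Finset.card_eq_sum_card_fiberwise (f := Prod.snd) (s := G.filter fun e => e.2 ∈ T) (t := T)
    (fun x hx => (Finset.mem_filter.mp hx).2)]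
  apply Finset.sum_congr rfl
  intro w hw
  unfold deg2
  congr 1
  rw [Finset.filter_filter]
  apply Finset.filter_congr
  intro e _
  constructor
  · exact fun h => ⟨h ▸ hw, h⟩
  · exact fun h => h.2

lemma split_S (G : Finset (V × V)) (S T : Finset V) :
    (G.filter fun e => e.1 ∈ S).card
      = (G.filter fun e => e.1 ∈ S ∧ e.2 ∈ T).card
        + (G.filter fun e => e.1 ∈ S ∧ e.2 ∉ T).card := by
  rw [← Finset.card_filter_add_card_filter_not (s := G.filter fun e => e.1 ∈ S)
    (p := fun e => e.2 ∈ T)]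
  rw [Finset.filter_filter, Finset.filter_filter]

lemma deg1_sdiff {G M : Finset (V × V)} (hM : M ⊆ G) (u : V) :
    deg1 (G \ M) u = deg1 G u - deg1 M u := by
  unfold deg1
  have h : (G \ M).filter (fun e => e.1 = u) = G.filter (fun e => e.1 = u) \ M.filter (fun e => e.1 = u) := by
    ext e; simp only [Finset.mem_filter, Finset.mem_sdiff]; tauto
  rw [h, Finset.card_sdiff_of_subset (Finset.filter_subset_filter _ hM)]

lemma deg2_sdiff {G M : Finset (V × V)} (hM : M ⊆ G) (w : V) :
    deg2 (G \ M) w = deg2 G w - deg2 M w := by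
  unfold deg2
  have h : (G \ M).filter (fun e => e.2 = w) = G.filter (fun e => e.2 = w) \ M.filter (fun e => e.2 = w) := by
    ext e; simp only [Finset.mem_filter, Finset.mem_sdiff]; tauto
  rw [h, Finset.card_sdiff_of_subset (Finset.filter_subset_filter _ hM)]


lemma key_ineq (m σ τ E μ ε ρ : ℝ)
    (hm0 : 0 ≤ m) (hσ0 : 0 ≤ σ) (hσm : σ ≤ m) (hτ0 : 0 ≤ τ) (hτm : τ ≤ m) (hE0 : 0 ≤ E)
    (hμ0 : 0 ≤ μ) (hμ : μ ≤ 1/4) (hε0 : 0 < ε) (hρ0 : 0 < ρ) (hρ8 : ρ ≤ 1/8)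
    (hερ : ε ≤ ρ^2/2)
    (hA1 : (1-μ-ε)*m*σ - σ*τ ≤ E)
    (hA2 : (1-μ-ε)*m*σ - (1-μ+ε)*m*τ ≤ E)
    (hA3 : (1-μ-ε)*m*(m-τ) - (m-σ)*(m-τ) ≤ E)
    (hA4 : (1-μ-ε)*m*(m-τ) - (1-μ+ε)*m*(m-σ) ≤ E) :
    (1-μ-ρ)*m*(σ-τ) ≤ E := by
  have hρε : ρ*ε ≤ ε := by nlinarith [mul_le_mul_of_nonneg_right hρ8 hε0.le]
  have heρ : ε ≤ ρ := by linarith [mul_le_mul_of_nonneg_left hρ8 hρ0.le, hερ]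
  have hR0 : 0 ≤ (1-μ-ρ)*m := mul_nonneg (by linarith) hm0
  by_cases hστ : σ ≤ τ
  · have := mul_nonneg hR0 (by linarith : (0:ℝ) ≤ τ - σ)
    nlinarith [this]
  push_neg at hστ
  have hστ' : 0 ≤ σ - τ := by linarith
  by_cases h1 : τ ≤ (ρ-ε)*m
  · -- C1
    have p1 : σ*τ ≤ σ*((ρ-ε)*m) := mul_le_mul_of_nonneg_left h1 hσ0
    have p2 : 0 ≤ (1-μ-ρ)*m*τ := mul_nonneg hR0 hτ0
    linarith [hA1, p1, p2]
  push_neg at h1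
  by_cases h2 : m - σ ≤ (ρ-ε)*m
  · -- C2
    have p1 : (m-σ)*(m-τ) ≤ ((ρ-ε)*m)*(m-τ) :=
      mul_le_mul_of_nonneg_right h2 (by linarith)
    have p2 : 0 ≤ (1-μ-ρ)*m*(m-σ) := mul_nonneg hR0 (by linarith)
    linarith [hA3, p1, p2]
  push_neg at h2
  by_cases h3 : ε*m ≤ ρ*(σ-τ)
  · -- C3
    have p1 : 0 ≤ (ρ*(σ-τ) - ε*m)*m := mul_nonneg (by linarith) hm0
    linarith [hA2, hA4, p1]
  push_neg at h3
  have hq0 : 0 ≤ ρ^2 - ρ*ε - ε := by linarith [hρε, hερ]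
  have h5 : ε*m ≤ ρ*((ρ-ε)*m) := by linarith [mul_nonneg hm0 hq0]

  have hup : σ - τ ≤ (ρ-ε)*m := by
    have := h3.le.trans h5
    exact le_of_mul_le_mul_left this hρ0
  have hupR : (1-μ-ρ)*m*(σ-τ) ≤ (1-μ-ρ)*m*((ρ-ε)*m) :=
    mul_le_mul_of_nonneg_left hup hR0
  by_cases h4 : σ ≤ (1-μ-ρ)*m
  · -- C4
    have p1 : 0 ≤ (σ - (ρ-ε)*m)*((1-μ-ρ)*m - σ) :=
      mul_nonneg (by linarith) (by linarith)
    have p2 : 0 ≤ σ*(σ-τ) := mul_nonneg hσ0 hστ'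
    linarith [hA1, p1, p2, hupR]
  push_neg at h4
  -- C5
  have hq : m - σ ≤ (1-μ-ρ)*m := by linarith [mul_nonneg hm0 (by linarith : (0:ℝ) ≤ 1-2*μ-2*ρ)]
  have p1 : 0 ≤ ((m-σ) - (ρ-ε)*m)*((1-μ-ρ)*m - (m-σ)) :=
    mul_nonneg (by linarith) (by linarith)
  have p2 : 0 ≤ (σ-τ)*((1-μ-ε)*m - (m-σ)) :=
    mul_nonneg hστ' (by linarith [mul_nonneg hm0 (by linarith : (0:ℝ) ≤ ρ-ε)])
  linarith [hA3, p1, p2, hupR]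


section Gadget

/-- dummy vertices -/
def dum (v : V) (k : ℕ) : Finset ((V × V) ⊕ (V × ℕ)) :=
  (Finset.range k).image fun i => Sum.inr (v, i)

lemma mem_dum {v : V} {k : ℕ} {x : (V × V) ⊕ (V × ℕ)} :
    x ∈ dum v k ↔ ∃ i, i < k ∧ x = Sum.inr (v, i) := by
  simp only [dum, Finset.mem_image, Finset.mem_range]
  constructor
  · rintro ⟨i, hi, rfl⟩; exact ⟨i, hi, rfl⟩
  · rintro ⟨i, hi, rfl⟩; exact ⟨i, hi, rfl⟩

lemma card_dum (v : V) (k : ℕ) : (dum v k).card = k := by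
  rw [dum, Finset.card_image_of_injective _ (fun a b h => by simpa using h),
    Finset.card_range]

lemma dum_disjoint {v v' : V} {k k' : ℕ} (h : v ≠ v') : Disjoint (dum v k) (dum v' k') := by
  rw [Finset.disjoint_left]
  intro x hx hx'
  rw [mem_dum] at hx hx'
  obtain ⟨i, _, rfl⟩ := hx
  obtain ⟨i', _, h2⟩ := hx'
  injection h2 with h3
  exact h (congrArg Prod.fst h3)

def leftV (W : Finset V) (G : Finset (V × V)) (r : ℕ) : Finset ((V × V) ⊕ (V × ℕ)) :=
  G.image Sum.inl ∪ W.biUnion (fun w => dum w (deg2 G w - r))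

def rightV (U : Finset V) (G : Finset (V × V)) (r : ℕ) : Finset ((V × V) ⊕ (V × ℕ)) :=
  G.image Sum.inl ∪ U.biUnion (fun u => dum u (deg1 G u - r))

lemma mem_leftV_inl {W : Finset V} {G : Finset (V × V)} {r : ℕ} {e : V × V} :
    Sum.inl e ∈ leftV W G r ↔ e ∈ G := by
  simp only [leftV, Finset.mem_union, Finset.mem_image, Finset.mem_biUnion, mem_dum]
  constructor
  · rintro (⟨e', he', h⟩ | ⟨w, _, i, _, h⟩)
    · exact (Sum.inl.inj h) ▸ he'
    · exact absurd h (by simp)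
  · exact fun h => Or.inl ⟨e, h, rfl⟩

lemma mem_leftV_inr {W : Finset V} {G : Finset (V × V)} {r : ℕ} {w : V} {j : ℕ} :
    Sum.inr (w, j) ∈ leftV W G r ↔ w ∈ W ∧ j < deg2 G w - r := by
  simp only [leftV, Finset.mem_union, Finset.mem_image, Finset.mem_biUnion, mem_dum]
  constructor
  · rintro (⟨e', _, h⟩ | ⟨w', hw', i, hi, h⟩)
    · exact absurd h (by simp)
    · obtain ⟨h1, h2⟩ := Prod.mk.inj (Sum.inr.inj h).symm
      subst h1; subst h2; exact ⟨hw', hi⟩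
  · rintro ⟨hw, hj⟩; exact Or.inr ⟨w, hw, j, hj, rfl⟩

lemma mem_rightV_inl {U : Finset V} {G : Finset (V × V)} {r : ℕ} {e : V × V} :
    Sum.inl e ∈ rightV U G r ↔ e ∈ G := by
  simp only [rightV, Finset.mem_union, Finset.mem_image, Finset.mem_biUnion, mem_dum]
  constructor
  · rintro (⟨e', he', h⟩ | ⟨w, _, i, _, h⟩)
    · exact (Sum.inl.inj h) ▸ he'
    · exact absurd h (by simp)
  · exact fun h => Or.inl ⟨e, h, rfl⟩

lemma mem_rightV_inr {U : Finset V} {G : Finset (V × V)} {r : ℕ} {u : V} {j : ℕ} :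
    Sum.inr (u, j) ∈ rightV U G r ↔ u ∈ U ∧ j < deg1 G u - r := by
  simp only [rightV, Finset.mem_union, Finset.mem_image, Finset.mem_biUnion, mem_dum]
  constructor
  · rintro (⟨e', _, h⟩ | ⟨w', hw', i, hi, h⟩)
    · exact absurd h (by simp)
    · obtain ⟨h1, h2⟩ := Prod.mk.inj (Sum.inr.inj h).symm
      subst h1; subst h2; exact ⟨hw', hi⟩
  · rintro ⟨hw, hj⟩; exact Or.inr ⟨u, hw, j, hj, rfl⟩

def nbhd (G : Finset (V × V)) (r : ℕ) : (V × V) ⊕ (V × ℕ) → Finset ((V × V) ⊕ (V × ℕ))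
  | Sum.inl e => insert (Sum.inl e) (dum e.1 (deg1 G e.1 - r))
  | Sum.inr (w, _) => (G.filter fun e => e.2 = w).image Sum.inl

@[simp] lemma nbhd_inl (G : Finset (V × V)) (r : ℕ) (e : V × V) :
    nbhd G r (Sum.inl e) = insert (Sum.inl e) (dum e.1 (deg1 G e.1 - r)) := rfl

@[simp] lemma nbhd_inr (G : Finset (V × V)) (r : ℕ) (w : V) (j : ℕ) :
    nbhd G r (Sum.inr (w, j)) = (G.filter fun e => e.2 = w).image Sum.inl := rfl

end Gadget


lemma card_leftV (W : Finset V) (G : Finset (V × V)) (r : ℕ) :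
    (leftV W G r).card = G.card + ∑ w ∈ W, (deg2 G w - r) := by
  rw [leftV, Finset.card_union_of_disjoint, Finset.card_image_of_injective _ Sum.inl_injective,
    Finset.card_biUnion]
  · congr 1
    exact Finset.sum_congr rfl fun w _ => card_dum w _
  · exact fun w _ w' _ h => dum_disjoint h
  · rw [Finset.disjoint_left]
    rintro x hx hx'
    obtain ⟨e, _, rfl⟩ := Finset.mem_image.mp hx
    obtain ⟨w, _, hw⟩ := Finset.mem_biUnion.mp hx'
    obtain ⟨i, _, h⟩ := mem_dum.mp hw
    exact absurd h (by simp)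

lemma card_rightV (U : Finset V) (G : Finset (V × V)) (r : ℕ) :
    (rightV U G r).card = G.card + ∑ u ∈ U, (deg1 G u - r) := by
  rw [rightV, Finset.card_union_of_disjoint, Finset.card_image_of_injective _ Sum.inl_injective,
    Finset.card_biUnion]
  · congr 1
    exact Finset.sum_congr rfl fun w _ => card_dum w _
  · exact fun w _ w' _ h => dum_disjoint h
  · rw [Finset.disjoint_left]
    rintro x hx hx'
    obtain ⟨e, _, rfl⟩ := Finset.mem_image.mp hx
    obtain ⟨w, _, hw⟩ := Finset.mem_biUnion.mp hx'
    obtain ⟨i, _, h⟩ := mem_dum.mp hw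
    exact absurd h (by simp)

lemma hall_gadget (U W : Finset V) (G : Finset (V × V)) (r : ℕ)
    (hG : ∀ e ∈ G, e.1 ∈ U ∧ e.2 ∈ W)
    (hge1 : ∀ u ∈ U, r ≤ deg1 G u) (hge2 : ∀ w ∈ W, r ≤ deg2 G w)
    (hcut : ∀ S ⊆ U, ∀ T ⊆ W,
      r * S.card ≤ (G.filter fun e => e.1 ∈ S ∧ e.2 ∉ T).card + r * T.card) :
    ∀ B ⊆ leftV W G r, B.card ≤ (B.biUnion (nbhd G r)).card := by
  intro B hB
  classical
  set E' := G.filter (fun e => Sum.inl e ∈ B) with hE'def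
  set S := E'.image Prod.fst with hSdef
  set T := W.filter (fun w => ∃ j, Sum.inr (w, j) ∈ B) with hTdef
  have hS : S ⊆ U := by
    intro u hu
    obtain ⟨e, he, rfl⟩ := Finset.mem_image.mp hu
    exact (hG e (Finset.mem_filter.mp he).1).1
  have hT : T ⊆ W := Finset.filter_subset _ _
  -- split B
  have hBsplit : (B.filter (fun x => x.isLeft = true)).card
      + (B.filter (fun x => ¬ x.isLeft = true)).card = B.card :=
    Finset.card_filter_add_card_filter_not _
  have hBl : B.filter (fun x => x.isLeft = true) = E'.image (Sum.inl : V × V → (V × V) ⊕ (V × ℕ)) := by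
    ext x
    constructor
    · intro hx
      obtain ⟨hxB, hxl⟩ := Finset.mem_filter.mp hx
      match x with
      | Sum.inl e =>
        exact Finset.mem_image_of_mem _
          (Finset.mem_filter.mpr ⟨mem_leftV_inl.mp (hB hxB), hxB⟩)
      | Sum.inr _ => simp at hxl
    · intro hx
      obtain ⟨e, he, rfl⟩ := Finset.mem_image.mp hx
      exact Finset.mem_filter.mpr ⟨(Finset.mem_filter.mp he).2, rfl⟩
  have hBlcard : (B.filter (fun x => x.isLeft = true)).card = E'.card := by
    rw [hBl, Finset.card_image_of_injective _ Sum.inl_injective]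
  have hBr : B.filter (fun x => ¬ x.isLeft = true) ⊆
      T.biUnion (fun w => dum w (deg2 G w - r)) := by
    intro x hx
    obtain ⟨hxB, hxr⟩ := Finset.mem_filter.mp hx
    match x with
    | Sum.inl e => simp at hxr
    | Sum.inr (w, j) =>
      have hm := mem_leftV_inr.mp (hB hxB)
      refine Finset.mem_biUnion.mpr ⟨w, ?_, mem_dum.mpr ⟨j, hm.2, rfl⟩⟩
      exact Finset.mem_filter.mpr ⟨hm.1, ⟨j, hxB⟩⟩
  have hBrcard : (B.filter (fun x => ¬ x.isLeft = true)).card ≤ ∑ w ∈ T, (deg2 G w - r) := by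
    refine (Finset.card_le_card hBr).trans ?_
    refine (Finset.card_biUnion_le).trans ?_
    exact le_of_eq (Finset.sum_congr rfl fun w _ => card_dum w _)
  -- split E'
  have hE'split : (E'.filter (fun e => e.2 ∈ T)).card + (E'.filter (fun e => e.2 ∉ T)).card
      = E'.card := by
    have := Finset.card_filter_add_card_filter_not
      (s := E') (p := fun e => e.2 ∈ T)
    simpa using this
  have hEt : (E'.filter (fun e => e.2 ∈ T)).card
      ≤ (G.filter fun e => e.1 ∈ S ∧ e.2 ∈ T).card := by
    apply Finset.card_le_card
    intro e he
    obtain ⟨he', h2⟩ := Finset.mem_filter.mp he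
    obtain ⟨heG, _⟩ := Finset.mem_filter.mp he'
    exact Finset.mem_filter.mpr ⟨heG, Finset.mem_image_of_mem Prod.fst he', h2⟩
  -- the neighbourhood
  set N := B.biUnion (nbhd G r) with hNdef
  have hN1 : (G.filter (fun e => e.2 ∈ T)).image (Sum.inl : V × V → (V × V) ⊕ (V × ℕ)) ⊆ N := by
    intro x hx
    obtain ⟨e, he, rfl⟩ := Finset.mem_image.mp hx
    obtain ⟨heG, heT⟩ := Finset.mem_filter.mp he
    obtain ⟨hw, j, hj⟩ := Finset.mem_filter.mp heT
    refine Finset.mem_biUnion.mpr ⟨Sum.inr (e.2, j), hj, ?_⟩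
    rw [nbhd_inr]
    exact Finset.mem_image_of_mem _ (Finset.mem_filter.mpr ⟨heG, rfl⟩)
  have hN3 : (E'.filter (fun e => e.2 ∉ T)).image (Sum.inl : V × V → (V × V) ⊕ (V × ℕ)) ⊆ N := by
    intro x hx
    obtain ⟨e, he, rfl⟩ := Finset.mem_image.mp hx
    have heB := (Finset.mem_filter.mp (Finset.mem_filter.mp he).1).2
    exact Finset.mem_biUnion.mpr ⟨Sum.inl e, heB, by rw [nbhd_inl]; exact Finset.mem_insert_self _ _⟩
  have hN2 : S.biUnion (fun u => dum u (deg1 G u - r)) ⊆ N := by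
    intro x hx
    obtain ⟨u, hu, hxd⟩ := Finset.mem_biUnion.mp hx
    obtain ⟨e, he, rfl⟩ := Finset.mem_image.mp hu
    have heB := (Finset.mem_filter.mp he).2
    exact Finset.mem_biUnion.mpr ⟨Sum.inl e, heB, by rw [nbhd_inl]; exact Finset.mem_insert_of_mem hxd⟩
  have hNsub : ((G.filter (fun e => e.2 ∈ T)).image (Sum.inl : V × V → (V × V) ⊕ (V × ℕ))
      ∪ (E'.filter (fun e => e.2 ∉ T)).image (Sum.inl : V × V → (V × V) ⊕ (V × ℕ)))
      ∪ S.biUnion (fun u => dum u (deg1 G u - r)) ⊆ N :=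
    Finset.union_subset (Finset.union_subset hN1 hN3) hN2
  have hd13 : Disjoint ((G.filter (fun e => e.2 ∈ T)).image (Sum.inl : V × V → (V × V) ⊕ (V × ℕ)))
      ((E'.filter (fun e => e.2 ∉ T)).image (Sum.inl : V × V → (V × V) ⊕ (V × ℕ))) := by
    rw [Finset.disjoint_left]
    rintro x hx hx'
    obtain ⟨e, he, rfl⟩ := Finset.mem_image.mp hx
    obtain ⟨e', he', hee⟩ := Finset.mem_image.mp hx'
    cases Sum.inl_injective hee
    exact (Finset.mem_filter.mp he').2 (Finset.mem_filter.mp he).2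
  have hd2 : Disjoint ((G.filter (fun e => e.2 ∈ T)).image (Sum.inl : V × V → (V × V) ⊕ (V × ℕ))
      ∪ (E'.filter (fun e => e.2 ∉ T)).image (Sum.inl : V × V → (V × V) ⊕ (V × ℕ)))
      (S.biUnion (fun u => dum u (deg1 G u - r))) := by
    rw [Finset.disjoint_left]
    rintro x hx hx'
    obtain ⟨u, _, hxd⟩ := Finset.mem_biUnion.mp hx'
    obtain ⟨i, _, rfl⟩ := mem_dum.mp hxd
    rcases Finset.mem_union.mp hx with h | h
    · obtain ⟨e, _, he⟩ := Finset.mem_image.mp h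
      exact absurd he (by simp)
    · obtain ⟨e, _, he⟩ := Finset.mem_image.mp h
      exact absurd he (by simp)
  have hNcard : (G.filter (fun e => e.2 ∈ T)).card + (E'.filter (fun e => e.2 ∉ T)).card
      + ∑ u ∈ S, (deg1 G u - r) ≤ N.card := by
    calc (G.filter (fun e => e.2 ∈ T)).card + (E'.filter (fun e => e.2 ∉ T)).card
        + ∑ u ∈ S, (deg1 G u - r)
        = (((G.filter (fun e => e.2 ∈ T)).image (Sum.inl : V × V → (V × V) ⊕ (V × ℕ))
            ∪ (E'.filter (fun e => e.2 ∉ T)).image (Sum.inl : V × V → (V × V) ⊕ (V × ℕ)))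
            ∪ S.biUnion (fun u => dum u (deg1 G u - r))).card := by
          rw [Finset.card_union_of_disjoint hd2, Finset.card_union_of_disjoint hd13,
            Finset.card_image_of_injective _ Sum.inl_injective,
            Finset.card_image_of_injective _ Sum.inl_injective,
            Finset.card_biUnion (fun u _ u' _ h => dum_disjoint h)]
          congr 1
          exact (Finset.sum_congr rfl fun u _ => card_dum u _).symm
      _ ≤ N.card := Finset.card_le_card hNsub
  -- arithmetic
  have hsumT : ∑ w ∈ T, deg2 G w = ∑ w ∈ T, (deg2 G w - r) + r * T.card := by
    calc ∑ w ∈ T, deg2 G w = ∑ w ∈ T, ((deg2 G w - r) + r) :=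
          (Finset.sum_congr rfl fun w hw => Nat.sub_add_cancel (hge2 w (hT hw))).symm
      _ = ∑ w ∈ T, (deg2 G w - r) + ∑ _w ∈ T, r := Finset.sum_add_distrib
      _ = ∑ w ∈ T, (deg2 G w - r) + r * T.card := by
          rw [Finset.sum_const, smul_eq_mul, Nat.mul_comm]
  have hsumS : ∑ u ∈ S, deg1 G u = ∑ u ∈ S, (deg1 G u - r) + r * S.card := by
    calc ∑ u ∈ S, deg1 G u = ∑ u ∈ S, ((deg1 G u - r) + r) :=
          (Finset.sum_congr rfl fun u hu => Nat.sub_add_cancel (hge1 u (hS hu))).symm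
      _ = ∑ u ∈ S, (deg1 G u - r) + ∑ _u ∈ S, r := Finset.sum_add_distrib
      _ = ∑ u ∈ S, (deg1 G u - r) + r * S.card := by
          rw [Finset.sum_const, smul_eq_mul, Nat.mul_comm]
  have hTdeg : (G.filter (fun e => e.2 ∈ T)).card = ∑ w ∈ T, deg2 G w := (sum_deg2 G T).symm
  have hSdeg : ∑ u ∈ S, deg1 G u = (G.filter fun e => e.1 ∈ S ∧ e.2 ∈ T).card
      + (G.filter fun e => e.1 ∈ S ∧ e.2 ∉ T).card := by
    rw [sum_deg1, split_S]
  have hcut' := hcut S hS T hT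
  -- combine
  omega
lemma exists_regular (U W : Finset V) (G : Finset (V × V)) (r : ℕ)
    (hG : ∀ e ∈ G, e.1 ∈ U ∧ e.2 ∈ W) (hUW : U.card = W.card)
    (hge1 : ∀ u ∈ U, r ≤ deg1 G u) (hge2 : ∀ w ∈ W, r ≤ deg2 G w)
    (hcut : ∀ S ⊆ U, ∀ T ⊆ W,
      r * S.card ≤ (G.filter fun e => e.1 ∈ S ∧ e.2 ∉ T).card + r * T.card) :
    ∃ G', G' ⊆ G ∧ (∀ u ∈ U, deg1 G' u = r) ∧ (∀ w ∈ W, deg2 G' w = r) := by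
  classical
  have hallcond : ∀ A : Finset {x // x ∈ leftV W G r},
      A.card ≤ (A.biUnion fun x => nbhd G r x.1).card := by
    intro A
    have h1 : A.card = (A.image Subtype.val).card :=
      (Finset.card_image_of_injective _ Subtype.val_injective).symm
    have h2 : (A.image Subtype.val).biUnion (nbhd G r) = A.biUnion fun x => nbhd G r x.1 :=
      Finset.image_biUnion
    rw [h1, ← h2]
    refine hall_gadget U W G r hG hge1 hge2 hcut _ ?_
    intro x hx
    obtain ⟨y, _, rfl⟩ := Finset.mem_image.mp hx
    exact y.2
  obtain ⟨f, finj, hf⟩ := (Finset.all_card_le_biUnion_card_iff_exists_injective _).mp hallcond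
  set F : (V × V) ⊕ (V × ℕ) → (V × V) ⊕ (V × ℕ) :=
    fun x => if h : x ∈ leftV W G r then f ⟨x, h⟩ else x with hFdef
  have hFmem : ∀ x (h : x ∈ leftV W G r), F x ∈ nbhd G r x := by
    intro x h
    rw [hFdef]
    simp only [dif_pos h]
    exact hf ⟨x, h⟩
  have hFinj : ∀ x ∈ leftV W G r, ∀ y ∈ leftV W G r, F x = F y → x = y := by
    intro x hx y hy hxy
    rw [hFdef] at hxy
    simp only [dif_pos hx, dif_pos hy] at hxy
    exact congrArg Subtype.val (finj hxy)
  have hFright : ∀ x ∈ leftV W G r, F x ∈ rightV U G r := by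
    intro x hx
    have hm := hFmem x hx
    match x with
    | Sum.inl e =>
      rw [nbhd_inl] at hm
      rcases Finset.mem_insert.mp hm with h | h
      · rw [h]; exact mem_rightV_inl.mpr (mem_leftV_inl.mp hx)
      · obtain ⟨i, hi, hh⟩ := mem_dum.mp h
        rw [hh]; exact mem_rightV_inr.mpr ⟨(hG e (mem_leftV_inl.mp hx)).1, hi⟩
    | Sum.inr (w, j) =>
      rw [nbhd_inr] at hm
      obtain ⟨e, he, hh⟩ := Finset.mem_image.mp hm
      rw [← hh]; exact mem_rightV_inl.mpr (Finset.mem_filter.mp he).1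
  have hsumW : ∑ w ∈ W, (deg2 G w - r) + r * W.card = G.card := by
    have e1 : ∑ w ∈ W, deg2 G w = G.card := by
      rw [sum_deg2]
      congr 1
      apply Finset.filter_true_of_mem
      intro e he; exact (hG e he).2
    calc ∑ w ∈ W, (deg2 G w - r) + r * W.card
        = ∑ w ∈ W, ((deg2 G w - r) + r) := by
          rw [Finset.sum_add_distrib, Finset.sum_const, smul_eq_mul, Nat.mul_comm]
      _ = ∑ w ∈ W, deg2 G w :=
          Finset.sum_congr rfl fun w hw => Nat.sub_add_cancel (hge2 w hw)
      _ = G.card := e1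
  have hsumU : ∑ u ∈ U, (deg1 G u - r) + r * U.card = G.card := by
    have e1 : ∑ u ∈ U, deg1 G u = G.card := by
      rw [sum_deg1]
      congr 1
      apply Finset.filter_true_of_mem
      intro e he; exact (hG e he).1
    calc ∑ u ∈ U, (deg1 G u - r) + r * U.card
        = ∑ u ∈ U, ((deg1 G u - r) + r) := by
          rw [Finset.sum_add_distrib, Finset.sum_const, smul_eq_mul, Nat.mul_comm]
      _ = ∑ u ∈ U, deg1 G u :=
          Finset.sum_congr rfl fun u hu => Nat.sub_add_cancel (hge1 u hu)
      _ = G.card := e1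
  have hcards : (leftV W G r).card = (rightV U G r).card := by
    rw [card_leftV, card_rightV]
    rw [hUW] at hsumU
    omega
  have himg : (leftV W G r).image F = rightV U G r := by
    apply Finset.eq_of_subset_of_card_le
    · intro y hy
      obtain ⟨x, hx, rfl⟩ := Finset.mem_image.mp hy
      exact hFright x hx
    · rw [Finset.card_image_of_injOn (fun x hx y hy => hFinj x hx y hy)]
      exact le_of_eq hcards.symm
  have hsurj : ∀ y ∈ rightV U G r, ∃ x, x ∈ leftV W G r ∧ F x = y := by
    intro y hy
    rw [← himg] at hy
    obtain ⟨x, hx, hxy⟩ := Finset.mem_image.mp hy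
    exact ⟨x, hx, hxy⟩
  set G' := G.filter (fun e => F (Sum.inl e) = Sum.inl e) with hG'def
  refine ⟨G', Finset.filter_subset _ _, ?_, ?_⟩
  · -- u side
    intro u hu
    set Eu := G.filter (fun e => e.1 = u) with hEudef
    have hEuD : Eu.card = deg1 G u := rfl
    set Sel := Eu.filter (fun e => F (Sum.inl e) = Sum.inl e) with hSeldef
    set NSel := Eu.filter (fun e => ¬ F (Sum.inl e) = Sum.inl e) with hNSeldef
    have hSN : Sel.card + NSel.card = Eu.card :=
      Finset.card_filter_add_card_filter_not _
    have hdeg : deg1 G' u = Sel.card := by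
      unfold deg1
      congr 1
      rw [hG'def, hSeldef, hEudef, Finset.filter_filter, Finset.filter_filter]
      apply Finset.filter_congr
      intro e _
      tauto
    have hmemEu : ∀ e ∈ Eu, e ∈ G ∧ e.1 = u := fun e he => Finset.mem_filter.mp he
    have hNSmap : ∀ e ∈ NSel, F (Sum.inl e) ∈ dum u (deg1 G u - r) := by
      intro e he
      obtain ⟨heEu, hne⟩ := Finset.mem_filter.mp he
      obtain ⟨heG, heu⟩ := hmemEu e heEu
      have hin := hFmem (Sum.inl e) (mem_leftV_inl.mpr heG)
      rw [nbhd_inl] at hin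
      rcases Finset.mem_insert.mp hin with h | h
      · exact absurd h hne
      · rw [heu] at h; exact h
    have hNSinj : Set.InjOn (fun e => F (Sum.inl e)) NSel := by
      intro e he e' he' hee
      have heG := (hmemEu e (Finset.mem_filter.mp he).1).1
      have heG' := (hmemEu e' (Finset.mem_filter.mp he').1).1
      exact Sum.inl_injective
        (hFinj _ (mem_leftV_inl.mpr heG) _ (mem_leftV_inl.mpr heG') hee)
    have hNScard : NSel.card ≤ deg1 G u - r := by
      rw [← Finset.card_image_of_injOn hNSinj]
      refine (Finset.card_le_card ?_).trans (le_of_eq (card_dum u _))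
      intro y hy
      obtain ⟨e, he, rfl⟩ := Finset.mem_image.mp hy
      exact hNSmap e he
    have hdumhit : dum u (deg1 G u - r) ⊆ NSel.image (fun e => F (Sum.inl e)) := by
      intro y hyd
      obtain ⟨i, hi, hyeq⟩ := mem_dum.mp hyd
      have hyr : y ∈ rightV U G r := by
        rw [hyeq]; exact mem_rightV_inr.mpr ⟨hu, hi⟩
      obtain ⟨x, hx, hxy⟩ := hsurj y hyr
      match x with
      | Sum.inr (w, j) =>
        have hm := hFmem _ hx
        rw [nbhd_inr] at hm
        obtain ⟨e, _, he⟩ := Finset.mem_image.mp hm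
        rw [hxy, hyeq] at he
        exact absurd he (by simp)
      | Sum.inl e =>
        have heG := mem_leftV_inl.mp hx
        have hm := hFmem _ hx
        rw [nbhd_inl] at hm
        rcases Finset.mem_insert.mp hm with h | h
        · rw [hxy, hyeq] at h; exact absurd h (by simp)
        · obtain ⟨i', _, he'⟩ := mem_dum.mp h
          rw [hxy, hyeq] at he'
          have heu : e.1 = u := by
            injection he' with hpair
            exact (congrArg Prod.fst hpair).symm
          have heNS : e ∈ NSel := by
            refine Finset.mem_filter.mpr ⟨Finset.mem_filter.mpr ⟨heG, heu⟩, ?_⟩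
            intro hcon
            rw [hcon] at hxy
            rw [← hxy] at hyeq
            exact absurd hyeq (by simp)
          exact Finset.mem_image.mpr ⟨e, heNS, hxy⟩
    have hNScard2 : deg1 G u - r ≤ NSel.card := by
      calc deg1 G u - r = (dum u (deg1 G u - r)).card := (card_dum u _).symm
        _ ≤ (NSel.image (fun e => F (Sum.inl e))).card := Finset.card_le_card hdumhit
        _ ≤ NSel.card := Finset.card_image_le
    have hrD : r ≤ deg1 G u := hge1 u hu
    omega
  · -- w side
    intro w hw
    set Ew := G.filter (fun e => e.2 = w) with hEwdef
    have hEwD : Ew.card = deg2 G w := rfl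
    set Sel := Ew.filter (fun e => F (Sum.inl e) = Sum.inl e) with hSeldef
    set NSel := Ew.filter (fun e => ¬ F (Sum.inl e) = Sum.inl e) with hNSeldef
    have hSN : Sel.card + NSel.card = Ew.card :=
      Finset.card_filter_add_card_filter_not _
    have hdeg : deg2 G' w = Sel.card := by
      unfold deg2
      congr 1
      rw [hG'def, hSeldef, hEwdef, Finset.filter_filter, Finset.filter_filter]
      apply Finset.filter_congr
      intro e _
      tauto
    have hmemEw : ∀ e ∈ Ew, e ∈ G ∧ e.2 = w := fun e he => Finset.mem_filter.mp he
    -- upper bound : dummies of w map injectively into (non-selected) edge vertices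
    have hDmap : ∀ x ∈ dum w (deg2 G w - r),
        F x ∈ NSel.image (Sum.inl : V × V → (V × V) ⊕ (V × ℕ)) := by
      intro x hxd
      obtain ⟨j, hj, hxeq⟩ := mem_dum.mp hxd
      have hxL : x ∈ leftV W G r := by
        rw [hxeq]; exact mem_leftV_inr.mpr ⟨hw, hj⟩
      have hm := hFmem x hxL
      rw [hxeq] at hm ⊢
      rw [nbhd_inr] at hm
      obtain ⟨e, he, heq⟩ := Finset.mem_image.mp hm
      obtain ⟨heG, hew⟩ := Finset.mem_filter.mp he
      have heNS : e ∈ NSel := by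
        refine Finset.mem_filter.mpr ⟨Finset.mem_filter.mpr ⟨heG, hew⟩, ?_⟩
        intro hcon
        have := hFinj _ (mem_leftV_inr.mpr ⟨hw, hj⟩) _ (mem_leftV_inl.mpr heG)
          (by rw [hcon, ← heq])
        exact absurd this (by simp)
      exact Finset.mem_image.mpr ⟨e, heNS, heq⟩
    have hDinj : Set.InjOn F (dum w (deg2 G w - r)) := by
      intro x hx y hy hxy
      have hxL : x ∈ leftV W G r := by
        obtain ⟨j, hj, hxeq⟩ := mem_dum.mp hx
        rw [hxeq]; exact mem_leftV_inr.mpr ⟨hw, hj⟩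
      have hyL : y ∈ leftV W G r := by
        obtain ⟨j, hj, hyeq⟩ := mem_dum.mp hy
        rw [hyeq]; exact mem_leftV_inr.mpr ⟨hw, hj⟩
      exact hFinj x hxL y hyL hxy
    have hNScard : deg2 G w - r ≤ NSel.card := by
      calc deg2 G w - r = (dum w (deg2 G w - r)).card := (card_dum w _).symm
        _ = ((dum w (deg2 G w - r)).image F).card :=
            (Finset.card_image_of_injOn hDinj).symm
        _ ≤ (NSel.image (Sum.inl : V × V → (V × V) ⊕ (V × ℕ))).card := by
            apply Finset.card_le_card
            intro y hy
            obtain ⟨x, hx, rfl⟩ := Finset.mem_image.mp hy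
            exact hDmap x hx
        _ = NSel.card := Finset.card_image_of_injective _ Sum.inl_injective
    -- lower bound : every non-selected edge vertex is hit by a dummy of w
    have hNSsub : NSel.image (Sum.inl : V × V → (V × V) ⊕ (V × ℕ))
        ⊆ (dum w (deg2 G w - r)).image F := by
      intro y hy
      obtain ⟨e, he, rfl⟩ := Finset.mem_image.mp hy
      obtain ⟨heEw, hne⟩ := Finset.mem_filter.mp he
      obtain ⟨heG, hew⟩ := hmemEw e heEw
      have hyr : Sum.inl e ∈ rightV U G r := mem_rightV_inl.mpr heG
      obtain ⟨x, hxL, hxy⟩ := hsurj _ hyr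
      obtain e' | ⟨w', j⟩ := x
      · have hm := hFmem _ hxL
        rw [nbhd_inl] at hm
        rcases Finset.mem_insert.mp hm with h | h
        · rw [hxy] at h
          have hee : e = e' := Sum.inl_injective h
          subst hee
          exact absurd hxy hne
        · obtain ⟨i, _, he'⟩ := mem_dum.mp h
          rw [hxy] at he'
          exact absurd he' (by simp)
      · have hm := hFmem _ hxL
        rw [nbhd_inr] at hm
        rw [hxy] at hm
        obtain ⟨e'', he'', heq⟩ := Finset.mem_image.mp hm
        have hee : e'' = e := Sum.inl_injective heq
        subst hee
        have hww : w' = w := by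
          rw [← (Finset.mem_filter.mp he'').2, hew]
        subst hww
        have hxd : Sum.inr (w', j) ∈ dum w' (deg2 G w' - r) := by
          obtain ⟨hw', hj⟩ := mem_leftV_inr.mp hxL
          exact mem_dum.mpr ⟨j, hj, rfl⟩
        exact Finset.mem_image.mpr ⟨Sum.inr (w', j), hxd, hxy⟩
    have hNScard2 : NSel.card ≤ deg2 G w - r := by
      calc NSel.card
          = (NSel.image (Sum.inl : V × V → (V × V) ⊕ (V × ℕ))).card :=
            (Finset.card_image_of_injective _ Sum.inl_injective).symm
        _ ≤ ((dum w (deg2 G w - r)).image F).card := Finset.card_le_card hNSsub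
        _ ≤ (dum w (deg2 G w - r)).card := Finset.card_image_le
        _ = deg2 G w - r := card_dum w _
    have hrD : r ≤ deg2 G w := hge2 w hw
    omega


lemma exists_PM (U W : Finset V) (H : Finset (V × V)) (k : ℕ) (hk : 1 ≤ k)
    (hH : ∀ e ∈ H, e.1 ∈ U ∧ e.2 ∈ W) (hUW : U.card = W.card)
    (hd1 : ∀ u ∈ U, deg1 H u = k) (hd2 : ∀ w ∈ W, deg2 H w = k) :
    ∃ M, M ⊆ H ∧ (∀ u ∈ U, deg1 M u = 1) ∧ (∀ w ∈ W, deg2 M w = 1) := by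
  classical
  set t : {u // u ∈ U} → Finset V :=
    fun u => (H.filter fun e => e.1 = u.1).image Prod.snd with htdef
  have hallcond : ∀ A : Finset {u // u ∈ U}, A.card ≤ (A.biUnion t).card := by
    intro A
    set S := A.image Subtype.val with hSdef
    have hScard : S.card = A.card := Finset.card_image_of_injective _ Subtype.val_injective
    set N := A.biUnion t with hNdef
    have hNW : N ⊆ W := by
      intro w hw
      obtain ⟨u, _, hu⟩ := Finset.mem_biUnion.mp hw
      obtain ⟨e, he, rfl⟩ := Finset.mem_image.mp hu
      exact (hH e (Finset.mem_filter.mp he).1).2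
    have hES : (H.filter fun e => e.1 ∈ S).card = k * S.card := by
      rw [← sum_deg1]
      rw [Finset.sum_congr rfl (fun u hu => hd1 u ?_), Finset.sum_const, smul_eq_mul,
        Nat.mul_comm]
      obtain ⟨u', _, rfl⟩ := Finset.mem_image.mp hu
      exact u'.2
    have hfib : (H.filter fun e => e.1 ∈ S).card
        = ∑ w ∈ N, ((H.filter fun e => e.1 ∈ S).filter fun e => e.2 = w).card := by
      apply Finset.card_eq_sum_card_fiberwise (f := Prod.snd)
      intro e he
      obtain ⟨heH, heS⟩ := Finset.mem_filter.mp he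
      obtain ⟨u', hu', hue⟩ := Finset.mem_image.mp heS
      refine Finset.mem_biUnion.mpr ⟨u', hu', ?_⟩
      exact Finset.mem_image.mpr ⟨e, Finset.mem_filter.mpr ⟨heH, hue.symm⟩, rfl⟩
    have hub : ∀ w ∈ N, ((H.filter fun e => e.1 ∈ S).filter fun e => e.2 = w).card ≤ k := by
      intro w hw
      rw [← hd2 w (hNW hw)]
      apply Finset.card_le_card
      intro e he
      obtain ⟨he', h2⟩ := Finset.mem_filter.mp he
      exact Finset.mem_filter.mpr ⟨(Finset.mem_filter.mp he').1, h2⟩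
    have : k * S.card ≤ k * N.card := by
      calc k * S.card = (H.filter fun e => e.1 ∈ S).card := hES.symm
        _ = ∑ w ∈ N, ((H.filter fun e => e.1 ∈ S).filter fun e => e.2 = w).card := hfib
        _ ≤ ∑ _w ∈ N, k := Finset.sum_le_sum hub
        _ = k * N.card := by rw [Finset.sum_const, smul_eq_mul, Nat.mul_comm]
    have := Nat.le_of_mul_le_mul_left this (by omega)
    omega
  obtain ⟨f, finj, hf⟩ := (Finset.all_card_le_biUnion_card_iff_exists_injective t).mp hallcond
  have hfW : ∀ u, f u ∈ W := by
    intro u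
    have := hf u
    obtain ⟨e, he, hee⟩ := Finset.mem_image.mp this
    rw [← hee]
    exact (hH e (Finset.mem_filter.mp he).1).2
  have hfH : ∀ u : {u // u ∈ U}, (u.1, f u) ∈ H := by
    intro u
    have := hf u
    obtain ⟨e, he, hee⟩ := Finset.mem_image.mp this
    obtain ⟨heH, he1⟩ := Finset.mem_filter.mp he
    have : e = (u.1, f u) := by
      rw [Prod.ext_iff]; exact ⟨he1, hee⟩
    rwa [this] at heH
  set M := U.attach.image (fun u => (u.1, f u)) with hMdef
  have hMH : M ⊆ H := by
    intro x hx
    obtain ⟨u, _, rfl⟩ := Finset.mem_image.mp hx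
    exact hfH u
  have himgf : U.attach.image (fun u => f u) = W := by
    apply Finset.eq_of_subset_of_card_le
    · intro w hw
      obtain ⟨u, _, rfl⟩ := Finset.mem_image.mp hw
      exact hfW u
    · rw [Finset.card_image_of_injective _ finj, Finset.card_attach, hUW]
  refine ⟨M, hMH, ?_, ?_⟩
  · intro u hu
    have : M.filter (fun e => e.1 = u) = {(u, f ⟨u, hu⟩)} := by
      ext x
      constructor
      · intro hx
        obtain ⟨hxM, hx1⟩ := Finset.mem_filter.mp hx
        obtain ⟨u', _, rfl⟩ := Finset.mem_image.mp hxM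
        have : u' = ⟨u, hu⟩ := Subtype.ext hx1
        subst this
        exact Finset.mem_singleton_self _
      · intro hx
        rw [Finset.mem_singleton] at hx
        subst hx
        exact Finset.mem_filter.mpr
          ⟨Finset.mem_image.mpr ⟨⟨u, hu⟩, Finset.mem_attach _ _, rfl⟩, rfl⟩
    unfold deg1
    rw [this, Finset.card_singleton]
  · intro w hw
    obtain ⟨u₀, _, hu₀⟩ := Finset.mem_image.mp (himgf ▸ hw)
    have : M.filter (fun e => e.2 = w) = {(u₀.1, f u₀)} := by
      ext x
      constructor
      · intro hx
        obtain ⟨hxM, hx2⟩ := Finset.mem_filter.mp hx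
        obtain ⟨u', _, rfl⟩ := Finset.mem_image.mp hxM
        have : u' = u₀ := finj (by rw [hu₀]; exact hx2)
        subst this
        exact Finset.mem_singleton_self _
      · intro hx
        rw [Finset.mem_singleton] at hx
        subst hx
        exact Finset.mem_filter.mpr
          ⟨Finset.mem_image.mpr ⟨u₀, Finset.mem_attach _ _, rfl⟩, hu₀⟩
    unfold deg2
    rw [this, Finset.card_singleton]

lemma decomp (U W : Finset V) (hUW : Disjoint U W) (hcard : U.card = W.card) :
    ∀ (k : ℕ) (H : Finset (V × V)), (∀ e ∈ H, e.1 ∈ U ∧ e.2 ∈ W) →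
    (∀ u ∈ U, deg1 H u = k) → (∀ w ∈ W, deg2 H w = k) →
    ∃ Fm : Fin k → Finset (V × V),
      (∀ j, Fm j ⊆ H ∧ IsPerfectMatching U W (Fm j)) ∧
      (∀ j j', j ≠ j' → Disjoint (Fm j) (Fm j')) := by
  intro k
  induction k with
  | zero => exact fun H _ _ _ => ⟨fun j => ∅, fun j => j.elim0, fun j => j.elim0⟩
  | succ n ih =>
    intro H hH hd1 hd2
    obtain ⟨M, hMH, hM1, hM2⟩ := exists_PM U W H (n + 1) (Nat.succ_le_succ (Nat.zero_le n))
      hH hcard hd1 hd2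
    have hMedge : ∀ e ∈ M, e.1 ∈ U ∧ e.2 ∈ W := fun e he => hH e (hMH he)
    have hPM : IsPerfectMatching U W M := by
      refine ⟨hMedge, ?_⟩
      intro v hv
      rcases Finset.mem_union.mp hv with hu | hw
      · rw [bdeg_eq_deg1 hUW hMedge hu]; exact hM1 v hu
      · rw [bdeg_eq_deg2 hUW hMedge hw]; exact hM2 v hw
    have hd1' : ∀ u ∈ U, deg1 (H \ M) u = n := by
      intro u hu
      rw [deg1_sdiff hMH, hd1 u hu, hM1 u hu]
      omega
    have hd2' : ∀ w ∈ W, deg2 (H \ M) w = n := by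
      intro w hw
      rw [deg2_sdiff hMH, hd2 w hw, hM2 w hw]
      omega
    obtain ⟨Fm', h1, h2⟩ := ih (H \ M)
      (fun e he => hH e (Finset.sdiff_subset he)) hd1' hd2'
    refine ⟨Fin.cons M Fm', ?_, ?_⟩
    · intro j
      refine Fin.cases ?_ ?_ j
      · rw [Fin.cons_zero]; exact ⟨hMH, hPM⟩
      · intro i
        rw [Fin.cons_succ]
        exact ⟨((h1 i).1).trans Finset.sdiff_subset, (h1 i).2⟩
    · intro j j' hne
      have hdisjM : ∀ i, Disjoint M (Fm' i) := by
        intro i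
        exact Finset.disjoint_of_subset_right (h1 i).1 Finset.disjoint_sdiff
      rcases Fin.eq_zero_or_eq_succ j with rfl | ⟨i, rfl⟩ <;>
        rcases Fin.eq_zero_or_eq_succ j' with rfl | ⟨i', rfl⟩
      · exact absurd rfl hne
      · rw [Fin.cons_zero, Fin.cons_succ]; exact hdisjM i'
      · rw [Fin.cons_zero, Fin.cons_succ]; exact (hdisjM i).symm
      · rw [Fin.cons_succ, Fin.cons_succ]
        exact h2 i i' (fun h => hne (congrArg Fin.succ h))


lemma cut_cond (U W : Finset V) (G : Finset (V × V)) (m d : ℕ) (μ ε ρ : ℝ)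
    (hUW : Disjoint U W) (hU : U.card = m) (hWc : W.card = m)
    (hG : ∀ e ∈ G, e.1 ∈ U ∧ e.2 ∈ W)
    (hμ0 : 0 ≤ μ) (hμ : μ ≤ 1/4) (hε0 : 0 < ε) (hρ0 : 0 < ρ) (hρ8 : ρ ≤ 1/8)
    (hερ : ε ≤ ρ^2/2) (hd : (d : ℝ) = (1-μ-ρ)*m)
    (hdeg : ∀ v ∈ U ∪ W, (1-μ-ε)*m ≤ (bdeg G v : ℝ) ∧ (bdeg G v : ℝ) ≤ (1-μ+ε)*m) :
    ∀ S ⊆ U, ∀ T ⊆ W,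
      d * S.card ≤ (G.filter fun e => e.1 ∈ S ∧ e.2 ∉ T).card + d * T.card := by
  intro S hS T hT
  classical
  have hdeg1 : ∀ u ∈ U, (1-μ-ε)*m ≤ (deg1 G u : ℝ) ∧ (deg1 G u : ℝ) ≤ (1-μ+ε)*m := by
    intro u hu
    have := hdeg u (Finset.mem_union_left _ hu)
    rwa [bdeg_eq_deg1 hUW hG hu] at this
  have hdeg2 : ∀ w ∈ W, (1-μ-ε)*m ≤ (deg2 G w : ℝ) ∧ (deg2 G w : ℝ) ≤ (1-μ+ε)*m := by
    intro w hw
    have := hdeg w (Finset.mem_union_right _ hw)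
    rwa [bdeg_eq_deg2 hUW hG hw] at this
  set Sc := U \ S with hScdef
  set Tc := W \ T with hTcdef
  have hScc : Sc.card = m - S.card := by rw [hScdef, Finset.card_sdiff_of_subset hS, hU]
  have hTcc : Tc.card = m - T.card := by rw [hTcdef, Finset.card_sdiff_of_subset hT, hWc]
  have hsm : S.card ≤ m := hU ▸ Finset.card_le_card hS
  have htm : T.card ≤ m := hWc ▸ Finset.card_le_card hT
  set eST := (G.filter fun e => e.1 ∈ S ∧ e.2 ∈ T).card with heST
  set E := (G.filter fun e => e.1 ∈ S ∧ e.2 ∉ T).card with hE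
  -- (1) sum over S
  have n1 : ∑ u ∈ S, deg1 G u = eST + E := by rw [sum_deg1, split_S]
  -- (2) eST ≤ s * t
  have n2 : eST ≤ S.card * T.card := by
    rw [heST, ← Finset.card_product]
    apply Finset.card_le_card
    intro e he
    obtain ⟨_, h1, h2⟩ := Finset.mem_filter.mp he
    exact Finset.mem_product.mpr ⟨h1, h2⟩
  -- (3) eST ≤ sum of deg2 over T
  have n3 : eST ≤ ∑ w ∈ T, deg2 G w := by
    rw [sum_deg2]
    apply Finset.card_le_card
    intro e he
    obtain ⟨heG, _, h2⟩ := Finset.mem_filter.mp he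
    exact Finset.mem_filter.mpr ⟨heG, h2⟩
  -- (4) sum over Tc
  have hTcG : ∀ e ∈ G, (e.2 ∈ Tc ↔ e.2 ∉ T) := by
    intro e he
    rw [hTcdef, Finset.mem_sdiff]
    exact ⟨fun h => h.2, fun h => ⟨(hG e he).2, h⟩⟩
  set eScTc := (G.filter fun e => ¬ e.1 ∈ S ∧ e.2 ∉ T).card with heScTc
  have n4 : ∑ w ∈ Tc, deg2 G w = E + eScTc := by
    rw [sum_deg2]
    have h1 : G.filter (fun e => e.2 ∈ Tc) = G.filter (fun e => e.2 ∉ T) :=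
      Finset.filter_congr hTcG
    rw [h1]
    rw [← Finset.card_filter_add_card_filter_not
      (s := G.filter (fun e => e.2 ∉ T)) (p := fun e => e.1 ∈ S)]
    rw [Finset.filter_filter, Finset.filter_filter]
    congr 1
    · rw [hE]; congr 1; apply Finset.filter_congr; intro e _; tauto
    · rw [heScTc]; congr 1; apply Finset.filter_congr; intro e _; tauto
  -- (5) eScTc ≤ (m-s)(m-t)
  have n5 : eScTc ≤ Sc.card * Tc.card := by
    rw [heScTc, ← Finset.card_product]
    apply Finset.card_le_card
    intro e he
    obtain ⟨heG, h1, h2⟩ := Finset.mem_filter.mp he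
    refine Finset.mem_product.mpr ⟨?_, ?_⟩
    · rw [hScdef, Finset.mem_sdiff]; exact ⟨(hG e heG).1, h1⟩
    · rw [hTcdef, Finset.mem_sdiff]; exact ⟨(hG e heG).2, h2⟩
  -- (6) eScTc ≤ sum of deg1 over Sc
  have n6 : eScTc ≤ ∑ u ∈ Sc, deg1 G u := by
    rw [sum_deg1]
    apply Finset.card_le_card
    intro e he
    obtain ⟨heG, h1, _⟩ := Finset.mem_filter.mp he
    refine Finset.mem_filter.mpr ⟨heG, ?_⟩
    rw [hScdef, Finset.mem_sdiff]
    exact ⟨(hG e heG).1, h1⟩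
  -- real sums
  have rS_lb : (S.card : ℝ) * ((1-μ-ε)*m) ≤ ∑ u ∈ S, (deg1 G u : ℝ) := by
    have := Finset.card_nsmul_le_sum S (fun u => (deg1 G u : ℝ)) ((1-μ-ε)*m)
      (fun u hu => (hdeg1 u (hS hu)).1)
    simpa [nsmul_eq_mul] using this
  have rT_ub : ∑ w ∈ T, (deg2 G w : ℝ) ≤ (T.card : ℝ) * ((1-μ+ε)*m) := by
    have := Finset.sum_le_card_nsmul T (fun w => (deg2 G w : ℝ)) ((1-μ+ε)*m)
      (fun w hw => (hdeg2 w (hT hw)).2)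
    simpa [nsmul_eq_mul] using this
  have rTc_lb : (Tc.card : ℝ) * ((1-μ-ε)*m) ≤ ∑ w ∈ Tc, (deg2 G w : ℝ) := by
    have := Finset.card_nsmul_le_sum Tc (fun w => (deg2 G w : ℝ)) ((1-μ-ε)*m)
      (fun w hw => (hdeg2 w (Finset.mem_sdiff.mp hw).1).1)
    simpa [nsmul_eq_mul] using this
  have rSc_ub : ∑ u ∈ Sc, (deg1 G u : ℝ) ≤ (Sc.card : ℝ) * ((1-μ+ε)*m) := by
    have := Finset.sum_le_card_nsmul Sc (fun u => (deg1 G u : ℝ)) ((1-μ+ε)*m)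
      (fun u hu => (hdeg1 u (Finset.mem_sdiff.mp hu).1).2)
    simpa [nsmul_eq_mul] using this
  -- cast the combinatorial identities
  have c1 : (∑ u ∈ S, (deg1 G u : ℝ)) = (eST : ℝ) + (E : ℝ) := by
    rw [← Nat.cast_sum, n1]; push_cast; ring
  have c4 : (∑ w ∈ Tc, (deg2 G w : ℝ)) = (E : ℝ) + (eScTc : ℝ) := by
    rw [← Nat.cast_sum, n4]; push_cast; ring
  have c2 : (eST : ℝ) ≤ (S.card : ℝ) * (T.card : ℝ) := by exact_mod_cast n2
  have c3 : (eST : ℝ) ≤ ∑ w ∈ T, (deg2 G w : ℝ) := by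
    rw [← Nat.cast_sum]; exact_mod_cast n3
  have c5 : (eScTc : ℝ) ≤ (Sc.card : ℝ) * (Tc.card : ℝ) := by exact_mod_cast n5
  have c6 : (eScTc : ℝ) ≤ ∑ u ∈ Sc, (deg1 G u : ℝ) := by
    rw [← Nat.cast_sum]; exact_mod_cast n6
  have cSc : (Sc.card : ℝ) = (m : ℝ) - (S.card : ℝ) := by
    rw [hScc, Nat.cast_sub hsm]
  have cTc : (Tc.card : ℝ) = (m : ℝ) - (T.card : ℝ) := by
    rw [hTcc, Nat.cast_sub htm]
  rw [cSc] at c5 rSc_ub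
  rw [cTc] at c5 rTc_lb
  have hA1 : (1-μ-ε)*(m:ℝ)*((S.card : ℝ)) - ((S.card : ℝ))*((T.card : ℝ)) ≤ (E : ℝ) := by linarith [rS_lb, c1, c2]
  have hA2 : (1-μ-ε)*(m:ℝ)*((S.card : ℝ)) - (1-μ+ε)*(m:ℝ)*((T.card : ℝ)) ≤ (E : ℝ) := by linarith [rS_lb, c1, c3, rT_ub]
  have hA3 : (1-μ-ε)*(m:ℝ)*((m:ℝ)-((T.card : ℝ))) - ((m:ℝ)-((S.card : ℝ)))*((m:ℝ)-((T.card : ℝ))) ≤ (E : ℝ) := by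
    linarith [rTc_lb, c4, c5]
  have hA4 : (1-μ-ε)*(m:ℝ)*((m:ℝ)-((T.card : ℝ))) - (1-μ+ε)*(m:ℝ)*((m:ℝ)-((S.card : ℝ))) ≤ (E : ℝ) := by
    linarith [rTc_lb, c4, c6, rSc_ub]
  have key := key_ineq (m:ℝ) ((S.card : ℝ)) ((T.card : ℝ)) (E:ℝ) μ ε ρ (Nat.cast_nonneg m) (Nat.cast_nonneg _)
    (by exact_mod_cast hsm) (Nat.cast_nonneg _) (by exact_mod_cast htm)
    (Nat.cast_nonneg _) hμ0 hμ hε0 hρ0 hρ8 hερ hA1 hA2 hA3 hA4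
  have final : (d:ℝ) * ((S.card : ℝ)) ≤ (E:ℝ) + (d:ℝ) * ((T.card : ℝ)) := by
    rw [hd]; linarith [key]
  exact_mod_cast final

end RF

/-- Lemma 4.2: an almost-regular balanced bipartite graph contains a spanning
`(1-μ-ρ)m`-regular subgraph, and in particular `(1-μ-ρ)m` edge-disjoint perfect matchings. -/
theorem stmt0 :
    ∃ ρ₀ : ℝ, 0 < ρ₀ ∧ ∀ ρ : ℝ, 0 < ρ → ρ ≤ ρ₀ →
    ∃ ε₀ : ℝ, 0 < ε₀ ∧ ∀ ε : ℝ, 0 < ε → ε ≤ ε₀ →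
    ∃ m₀ : ℕ, ∀ m : ℕ, m₀ ≤ m →
    ∀ μ : ℝ, 0 ≤ μ → μ ≤ 1/4 →
    (∃ a : ℕ, (a : ℝ) = μ * m) → (∃ b : ℕ, (b : ℝ) = ρ * m) →
    ∀ (V : Type) [inst : DecidableEq V], ∀ (U W : Finset V) (Γ : Finset (V × V)),
      Disjoint U W → U.card = m → W.card = m →
      (∀ e ∈ Γ, e.1 ∈ U ∧ e.2 ∈ W) →
      (∀ v ∈ U ∪ W, (1 - μ - ε) * m ≤ (bdeg Γ v : ℝ) ∧ (bdeg Γ v : ℝ) ≤ (1 - μ + ε) * m) →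
      ∃ d : ℕ, (d : ℝ) = (1 - μ - ρ) * m ∧
        (∃ Γ' ⊆ Γ, ∀ v ∈ U ∪ W, bdeg Γ' v = d) ∧
        (∃ F : Fin d → Finset (V × V),
          (∀ j, F j ⊆ Γ ∧ IsPerfectMatching U W (F j)) ∧
          ∀ j j', j ≠ j' → Disjoint (F j) (F j')) := by
  refine ⟨1/8, by norm_num, ?_⟩
  intro ρ hρ0 hρ8
  refine ⟨ρ^2/2, by positivity, ?_⟩
  intro ε hε0 hερ
  refine ⟨1, ?_⟩
  intro m _ μ hμ0 hμ ⟨a, ha⟩ ⟨b, hb⟩ V inst U W Γ hUW hU hW hΓ hdeg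
  have hm0 : (0:ℝ) ≤ m := Nat.cast_nonneg m
  have heρ : ε ≤ ρ := by nlinarith
  have hab : a + b ≤ m := by
    have h1 : (0:ℝ) ≤ (1 - μ - ρ) * m := mul_nonneg (by linarith) hm0
    have h2 : ((a + b : ℕ) : ℝ) ≤ (m : ℝ) := by push_cast; rw [ha, hb]; nlinarith
    exact_mod_cast h2
  set d := m - a - b with hddef
  have hd : (d : ℝ) = (1 - μ - ρ) * m := by
    have h1 : m - a - b = m - (a + b) := by omega
    rw [hddef, h1, Nat.cast_sub hab]
    push_cast
    rw [ha, hb]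
    ring
  -- degree lower bounds
  have hge1 : ∀ u ∈ U, d ≤ RF.deg1 Γ u := by
    intro u hu
    have h1 := (hdeg u (Finset.mem_union_left _ hu)).1
    rw [RF.bdeg_eq_deg1 hUW hΓ hu] at h1
    have h2 : (d : ℝ) ≤ (RF.deg1 Γ u : ℝ) := by
      rw [hd]
      refine le_trans ?_ h1
      nlinarith
    exact_mod_cast h2
  have hge2 : ∀ w ∈ W, d ≤ RF.deg2 Γ w := by
    intro w hw
    have h1 := (hdeg w (Finset.mem_union_right _ hw)).1
    rw [RF.bdeg_eq_deg2 hUW hΓ hw] at h1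
    have h2 : (d : ℝ) ≤ (RF.deg2 Γ w : ℝ) := by
      rw [hd]
      refine le_trans ?_ h1
      nlinarith
    exact_mod_cast h2
  have hcut := RF.cut_cond U W Γ m d μ ε ρ hUW hU hW hΓ hμ0 hμ hε0 hρ0 hρ8 hερ hd hdeg
  obtain ⟨Γ', hΓ'sub, hreg1, hreg2⟩ :=
    RF.exists_regular U W Γ d hΓ (hU.trans hW.symm) hge1 hge2 hcut
  have hΓ'edges : ∀ e ∈ Γ', e.1 ∈ U ∧ e.2 ∈ W := fun e he => hΓ e (hΓ'sub he)
  obtain ⟨Fm, hFm1, hFm2⟩ := RF.decomp U W hUW (hU.trans hW.symm) d Γ' hΓ'edges hreg1 hreg2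
  refine ⟨d, hd, ⟨Γ', hΓ'sub, ?_⟩, ⟨Fm, fun j => ⟨((hFm1 j).1).trans hΓ'sub, (hFm1 j).2⟩, hFm2⟩⟩
  intro v hv
  rcases Finset.mem_union.mp hv with hu | hw
  · rw [RF.bdeg_eq_deg1 hUW hΓ'edges hu]; exact hreg1 v hu
  · rw [RF.bdeg_eq_deg2 hUW hΓ'edges hw]; exact hreg2 v hw
end

section
/- Let A, A₀, B, B₀ partition a vertex set V, let J be a Hamilton exceptional system, and let J* = J*_A + J*_B be the associated matching of fictive edges. If C_A is a Hamilton cycle on A consistent with J*_A and C_B is a Hamilton cycle on B consistent with J*_B, then C_A + C_B − J* + J is a Hamilton cycle on V. -/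
open SimpleGraph

/-- The degree of a vertex, as the cardinality of its neighbourhood. -/
noncomputable def degS {V : Type*} (J : SimpleGraph V) (v : V) : ℕ := (J.neighborSet v).ncard

/-- A path system: a graph which is a union of vertex-disjoint paths. -/
def PathSystem {V : Type*} (J : SimpleGraph V) : Prop := J.IsAcyclic ∧ ∀ v, degS J v ≤ 2

/-- The matching `J*_{AB}` induced by the nontrivial paths of a path system `J`. -/
def starAB {V : Type*} (J : SimpleGraph V) : SimpleGraph V where
  Adj x y := x ≠ y ∧ degS J x = 1 ∧ degS J y = 1 ∧ J.Reachable x y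
  symm := ⟨fun _ _ h => ⟨h.1.symm, h.2.2.1, h.2.1, h.2.2.2.symm⟩⟩
  loopless := ⟨fun _ h => h.1 rfl⟩

/-- The cycle graph traced out by `f : ZMod N → V`. -/
def cycOn {V : Type*} {N : ℕ} (f : ZMod N → V) : SimpleGraph V :=
  SimpleGraph.fromEdgeSet {e | ∃ i : ZMod N, e = s(f i, f (i + 1))}

/-- The cycle given by `f` visits the vertices `w 0, w 1, …, w (r-1)` in this (cyclic) order. -/
def VisitsInOrder {V : Type*} {N : ℕ} (f : ZMod N → V) (r : ℕ) (w : ℕ → V) : Prop :=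
  ∃ (i₀ : ZMod N) (o : ℕ → ℕ), StrictMonoOn o (Set.Iio r) ∧
    ∀ j < r, o j < N ∧ f (i₀ + (o j : ZMod N)) = w j

/-- `H` is a Hamilton cycle on the vertex set `A`. -/
def IsHamCycleOn {V : Type*} (H : SimpleGraph V) (A : Set V) : Prop :=
  ∃ (N : ℕ) (f : ZMod N → V), 3 ≤ N ∧ Function.Injective f ∧ Set.range f = A ∧ H = cycOn f

set_option linter.unusedSectionVars false
set_option linter.unusedVariables false
set_option maxHeartbeats 1000000

/-! ### Part 1 : lemmas about `cycOn` -/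

section cycOnLemmas

variable {V : Type*} {N : ℕ} {f : ZMod N → V}

lemma cycOn_adj {u v : V} :
    (cycOn f).Adj u v ↔ (∃ i : ZMod N, s(u, v) = s(f i, f (i + 1))) ∧ u ≠ v := by
  simp [cycOn, SimpleGraph.fromEdgeSet_adj, Set.mem_setOf_eq]

lemma cycOn_adj_mem_range {u v : V} (h : (cycOn f).Adj u v) : u ∈ Set.range f := by
  obtain ⟨⟨i, hi⟩, -⟩ := cycOn_adj.mp h
  rcases Sym2.eq_iff.mp hi with ⟨h1, -⟩ | ⟨h1, -⟩
  · exact ⟨i, h1.symm⟩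
  · exact ⟨i + 1, h1.symm⟩

lemma one_ne_zero_zmod (hN : 3 ≤ N) : (1 : ZMod N) ≠ 0 := by
  have : ((1 : ℕ) : ZMod N) ≠ ((0 : ℕ) : ZMod N) := by
    intro h
    have h1 : ((1 : ℕ) : ZMod N).val = 1 := ZMod.val_natCast_of_lt (by omega)
    have h0 : ((0 : ℕ) : ZMod N).val = 0 := ZMod.val_natCast_of_lt (by omega)
    rw [h] at h1; omega
  simpa using this

lemma two_ne_zero_zmod (hN : 3 ≤ N) : (2 : ZMod N) ≠ 0 := by
  have : ((2 : ℕ) : ZMod N) ≠ ((0 : ℕ) : ZMod N) := by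
    intro h
    have h1 : ((2 : ℕ) : ZMod N).val = 2 := ZMod.val_natCast_of_lt (by omega)
    have h0 : ((0 : ℕ) : ZMod N).val = 0 := ZMod.val_natCast_of_lt (by omega)
    rw [h] at h1; omega
  simpa using this

lemma cycOn_nbr (hf : Function.Injective f) (hN : 3 ≤ N) (k : ZMod N) :
    (cycOn f).neighborSet (f k) = {f (k - 1), f (k + 1)} := by
  ext w
  simp only [mem_neighborSet, Set.mem_insert_iff, Set.mem_singleton_iff]
  constructor
  · intro h
    obtain ⟨⟨i, hi⟩, hne⟩ := cycOn_adj.mp h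
    rcases Sym2.eq_iff.mp hi with ⟨h1, h2⟩ | ⟨h1, h2⟩
    · right; rw [h2, hf h1]
    · left; rw [h2]; congr 1
      have : k = i + 1 := hf h1
      rw [this]; ring
  · rintro (rfl | rfl)
    · refine cycOn_adj.mpr ⟨⟨k - 1, ?_⟩, ?_⟩
      · rw [sub_add_cancel]; exact Sym2.eq_swap
      · intro h
        have := hf h
        have h1 : (1 : ZMod N) = 0 := by
          have : k - (k - 1) = 0 := by rw [← this]; ring
          rw [sub_sub_cancel] at this; exact this
        exact one_ne_zero_zmod hN h1
    · refine cycOn_adj.mpr ⟨⟨k, rfl⟩, ?_⟩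
      · intro h
        have := hf h
        have h1 : (1 : ZMod N) = 0 := by
          have : k + 1 - k = 0 := by rw [← this]; ring
          rwa [add_sub_cancel_left] at this
        exact one_ne_zero_zmod hN h1

lemma cycOn_nbr_ncard (hf : Function.Injective f) (hN : 3 ≤ N) (k : ZMod N) :
    ((cycOn f).neighborSet (f k)).ncard = 2 := by
  rw [cycOn_nbr hf hN k]
  refine Set.ncard_pair ?_
  intro h
  have := hf h
  have h2 : (2 : ZMod N) = 0 := by
    have : k + 1 - (k - 1) = 0 := by rw [← this]; ring
    have h' : k + 1 - (k - 1) = 2 := by ring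
    rw [h'] at this; exact this
  exact two_ne_zero_zmod hN h2

lemma cycOn_nbr_empty {v : V} (hv : v ∉ Set.range f) : (cycOn f).neighborSet v = ∅ := by
  ext w
  simp only [mem_neighborSet, Set.mem_empty_iff_false, iff_false]
  intro h
  exact hv (cycOn_adj_mem_range h)

end cycOnLemmas

section PathSys

variable {V : Type*} [Fintype V] {J : SimpleGraph V}

lemma walk_nil_eq {u v : V} {p : J.Walk u v} (h : p.Nil) : u = v := by
  cases p with
  | nil => rfl
  | cons h' q => simp at h

lemma getVert_mem_support {u v : V} (p : J.Walk u v) (n : ℕ) : p.getVert n ∈ p.support := by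
  induction p generalizing n with
  | nil => simp [SimpleGraph.Walk.getVert]
  | cons h q ih =>
    cases n with
    | zero => simp [SimpleGraph.Walk.getVert]
    | succ m =>
      rw [SimpleGraph.Walk.getVert_cons_succ]
      simp only [SimpleGraph.Walk.support_cons, List.mem_cons]
      exact Or.inr (ih m)

lemma getVert_one_mem_tail {u v : V} (d : J.Walk u v) (h : ¬d.Nil) :
    d.getVert 1 ∈ d.support.tail := by
  cases d with
  | nil => simp at h
  | cons h' q =>
    rw [Walk.getVert_cons_succ, Walk.getVert_zero]
    simp only [Walk.support_cons, List.tail_cons]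
    exact q.start_mem_support

lemma maxpath (v : V) : ∃ (u : V) (p : J.Walk v u), p.IsPath ∧ ∀ z, J.Adj u z → z ∈ p.support := by
  by_contra h
  push_neg at h
  have key : ∀ n, ∃ (u : V) (p : J.Walk v u), p.IsPath ∧ p.length = n := by
    intro n
    induction n with
    | zero => exact ⟨v, Walk.nil, Walk.IsPath.nil, rfl⟩
    | succ m ih =>
      obtain ⟨u, p, hp, hl⟩ := ih
      obtain ⟨z, hz, hzs⟩ := h u p hp
      refine ⟨z, p.concat hz, ?_, by rw [Walk.length_concat, hl]⟩
      rw [← Walk.isPath_reverse_iff, Walk.reverse_concat]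
      rw [Walk.cons_isPath_iff]
      refine ⟨hp.reverse, ?_⟩
      rw [Walk.support_reverse, List.mem_reverse]
      exact hzs
  obtain ⟨u, p, hp, hl⟩ := key (Fintype.card V)
  have := hp.length_lt
  omega

lemma edge_head {u v z : V} (w : J.Walk u v) (hw : w.IsPath) (he : s(u, z) ∈ w.edges) :
    z = w.getVert 1 := by
  cases w with
  | nil => simp at he
  | cons h q =>
    simp only [Walk.edges_cons, List.mem_cons] at he
    rcases he with he | he
    · rcases Sym2.eq_iff.mp he with ⟨-, rfl⟩ | ⟨rfl, h2⟩
      · simp [Walk.getVert_cons_succ, Walk.getVert_zero]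
      · exact absurd h2 (by rintro rfl; exact h.ne rfl)
    · have := Walk.fst_mem_support_of_mem_edges q he
      rw [Walk.cons_isPath_iff] at hw
      exact absurd this hw.2

lemma endpoint_nbr (hac : J.IsAcyclic) {v u : V} (p : J.Walk v u) (hp : p.IsPath)
    (hmax : ∀ z, J.Adj u z → z ∈ p.support) (hnn : ¬p.Nil) :
    J.neighborSet u = {p.reverse.getVert 1} := by
  classical
  have hrp : p.reverse.IsPath := hp.reverse
  have hrnn : ¬p.reverse.Nil := by
    rw [Walk.nil_iff_length_eq, Walk.length_reverse, ← Walk.nil_iff_length_eq]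
    exact hnn
  have hadj1 : J.Adj u (p.reverse.getVert 1) := Walk.adj_snd hrnn
  ext z
  simp only [mem_neighborSet, Set.mem_singleton_iff]
  constructor
  · intro hz
    by_contra hne
    have hzs : z ∈ p.reverse.support := by
      rw [Walk.support_reverse, List.mem_reverse]; exact hmax z hz
    have hqp : (p.reverse.takeUntil z hzs).IsPath := hrp.takeUntil hzs
    have hno : s(z, u) ∉ (p.reverse.takeUntil z hzs).edges := by
      intro hmem
      rw [Sym2.eq_swap] at hmem
      have hmem' : s(u, z) ∈ p.reverse.edges := Walk.edges_takeUntil_subset _ hzs hmem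
      exact hne (edge_head p.reverse hrp hmem')
    have hcyc : (Walk.cons hz.symm (p.reverse.takeUntil z hzs)).IsCycle :=
      (Walk.cons_isCycle_iff _ hz.symm).mpr ⟨hqp, hno⟩
    exact hac _ hcyc
  · rintro rfl; exact hadj1

lemma exists_leaf (hac : J.IsAcyclic) (v : V) :
    ∃ u, J.Reachable v u ∧ degS J u ≤ 1 ∧ (degS J v = 1 → u ≠ v ∧ degS J u = 1) := by
  obtain ⟨u, p, hp, hmax⟩ := maxpath (J := J) v
  by_cases hnn : p.Nil
  · have hvu : v = u := walk_nil_eq hnn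
    subst hvu
    have hsupp : p.support = [v] := by
      rw [← Walk.nil_iff_support_eq]; exact hnn
    have hdeg0 : degS J v = 0 := by
      rw [degS, Set.ncard_eq_zero]
      ext z
      simp only [mem_neighborSet, Set.mem_empty_iff_false, iff_false]
      intro hz
      have := hmax z hz
      rw [hsupp] at this
      simp at this
      exact hz.ne this.symm
    exact ⟨v, Reachable.refl v, by omega, fun h1 => by omega⟩
  · have hdeg1 : degS J u = 1 := by
      rw [degS, endpoint_nbr hac p hp hmax hnn]
      exact Set.ncard_singleton _
    have hne : u ≠ v := by
      rintro rfl
      cases p with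
      | nil => exact hnn Walk.Nil.nil
      | cons h' q =>
        rw [Walk.cons_isPath_iff] at hp
        exact hp.2 q.end_mem_support
    exact ⟨u, p.reachable, by omega, fun _ => ⟨hne, hdeg1⟩⟩

/-- An internal vertex of a path has two distinct neighbours on the path's support. -/
lemma internal_two_nbrs {w1 w2 z : V} (P : J.Walk w1 w2) (hP : P.IsPath)
    (hz : z ∈ P.support) (h1 : z ≠ w1) (h2 : z ≠ w2) :
    ∃ z1 z2, z1 ≠ z2 ∧ J.Adj z z1 ∧ J.Adj z z2 ∧ z1 ∈ P.support ∧ z2 ∈ P.support := by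
  classical
  set t := P.takeUntil z hz with ht
  set d := P.dropUntil z hz with hd
  have htp : t.IsPath := hP.takeUntil hz
  have hdp : d.IsPath := hP.dropUntil hz
  have htnn : ¬t.Nil := fun h => h1 (walk_nil_eq h).symm
  have hdnn : ¬d.Nil := fun h => h2 (walk_nil_eq h)
  have htrnn : ¬t.reverse.Nil := by
    rw [Walk.nil_iff_length_eq, Walk.length_reverse, ← Walk.nil_iff_length_eq]; exact htnn
  refine ⟨t.reverse.getVert 1, d.getVert 1, ?_, Walk.adj_snd htrnn, Walk.adj_snd hdnn, ?_, ?_⟩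
  · -- distinctness via nodup of support of P = t.support ++ d.support.tail
    have hspec : t.append d = P := Walk.take_spec P hz
    have hsupp : P.support = t.support ++ d.support.tail := by
      rw [← hspec, Walk.support_append]
    have hnd : (t.support ++ d.support.tail).Nodup := by
      rw [← hsupp]; exact hP.support_nodup
    have hdisj := List.disjoint_of_nodup_append hnd
    have hmem1 : t.reverse.getVert 1 ∈ t.support := by
      have := getVert_mem_support t.reverse 1
      rwa [Walk.support_reverse, List.mem_reverse] at this
    have hmem2 : d.getVert 1 ∈ d.support.tail := getVert_one_mem_tail d hdnn
    intro heq
    exact hdisj hmem1 (heq ▸ hmem2)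
  · exact Walk.support_takeUntil_subset P hz (by
      have := getVert_mem_support t.reverse 1
      rwa [Walk.support_reverse, List.mem_reverse] at this)
  · exact Walk.support_dropUntil_subset P hz (getVert_mem_support d 1)

lemma ncard_le_of_two_mem {s : Set V} {a b : V} (hab : a ≠ b) (ha : a ∈ s) (hb : b ∈ s) :
    2 ≤ s.ncard := by
  have h1 : ({a, b} : Set V) ⊆ s := by intro z hz; rcases hz with rfl | rfl; exact ha; exact hb
  have := Set.ncard_le_ncard h1 (Set.toFinite s)
  rwa [Set.ncard_pair hab] at this

lemma ncard_le_of_three_mem {s : Set V} {a b c : V} (hab : a ≠ b) (hac : a ≠ c) (hbc : b ≠ c)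
    (ha : a ∈ s) (hb : b ∈ s) (hc : c ∈ s) : 3 ≤ s.ncard := by
  have h1 : ({a, b, c} : Set V) ⊆ s := by
    intro z hz; rcases hz with rfl | rfl | rfl
    exacts [ha, hb, hc]
  have := Set.ncard_le_ncard h1 (Set.toFinite s)
  have h3 : ({a, b, c} : Set V).ncard = 3 := Set.ncard_eq_three.mpr ⟨a, b, c, hab, hac, hbc, rfl⟩
  omega

lemma leaf_unique (hac : J.IsAcyclic) (hdeg : ∀ v, degS J v ≤ 2) {v w1 w2 : V}
    (hv : degS J v = 1)
    (hw1 : w1 ≠ v ∧ degS J w1 = 1 ∧ J.Reachable v w1)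
    (hw2 : w2 ≠ v ∧ degS J w2 = 1 ∧ J.Reachable v w2) : w1 = w2 := by
  classical
  by_contra hne
  obtain ⟨hw1v, hw1d, hw1r⟩ := hw1
  obtain ⟨hw2v, hw2d, hw2r⟩ := hw2
  obtain ⟨P0⟩ := hw1r.symm.trans hw2r
  set P := P0.toPath.1 with hPdef
  have hP : P.IsPath := P0.toPath.2
  -- v is not on P
  have hvP : v ∉ P.support := by
    intro hvmem
    obtain ⟨z1, z2, h12, ha1, ha2, -, -⟩ :=
      internal_two_nbrs P hP hvmem (Ne.symm hw1v) (Ne.symm hw2v)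
    have := ncard_le_of_two_mem h12 (J.mem_neighborSet v z1 |>.mpr ha1)
      (J.mem_neighborSet v z2 |>.mpr ha2)
    rw [← degS] at this  -- degS J v ≥ 2
    omega
  -- a path Q from v to w1
  obtain ⟨Q0⟩ := hw1r
  set Q := Q0.toPath.1 with hQdef
  have hQ : Q.IsPath := Q0.toPath.2
  have hex : ∃ n, Q.getVert n ∈ P.support := ⟨Q.length, by rw [Walk.getVert_length]; exact P.start_mem_support⟩
  set n₀ := Nat.find hex with hn₀
  have hzmem : Q.getVert n₀ ∈ P.support := Nat.find_spec hex
  set z := Q.getVert n₀ with hzdef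
  have hn₀pos : 0 < n₀ := by
    rcases Nat.eq_zero_or_pos n₀ with h | h
    · exfalso; apply hvP; rw [← Walk.getVert_zero Q, ← h]; exact hzmem
    · exact h
  have hn₀le : n₀ ≤ Q.length := by
    by_contra hgt
    push_neg at hgt
    exact absurd (Nat.find_min' hex (by rw [Walk.getVert_length]; exact P.start_mem_support)) (by omega)
  have hprev : Q.getVert (n₀ - 1) ∉ P.support := Nat.find_min hex (by omega)
  have hadjprev : J.Adj (Q.getVert (n₀ - 1)) z := by
    have := Walk.adj_getVert_succ Q (i := n₀ - 1) (by omega)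
    rwa [show n₀ - 1 + 1 = n₀ by omega] at this
  have hprevne : ∀ w ∈ P.support, Q.getVert (n₀ - 1) ≠ w := fun w hw heq => hprev (heq ▸ hw)
  by_cases hz1 : z = w1
  · -- z = w1, degree of w1 would be ≥ 2
    have hPnn : ¬P.Nil := fun h => hne (walk_nil_eq h)
    have hadj2 : J.Adj w1 (P.getVert 1) := Walk.adj_snd hPnn
    have hmem2 : P.getVert 1 ∈ P.support := getVert_mem_support P 1
    have := ncard_le_of_two_mem (hprevne _ hmem2)
      (J.mem_neighborSet w1 _ |>.mpr (hz1 ▸ hadjprev).symm)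
      (J.mem_neighborSet w1 _ |>.mpr hadj2)
    rw [← degS] at this
    omega
  by_cases hz2 : z = w2
  · have hPnn : ¬P.reverse.Nil := by
      rw [Walk.nil_iff_length_eq, Walk.length_reverse, ← Walk.nil_iff_length_eq]
      exact fun h => hne (walk_nil_eq h)
    have hadj2 : J.Adj w2 (P.reverse.getVert 1) := Walk.adj_snd hPnn
    have hmem2 : P.reverse.getVert 1 ∈ P.support := by
      have := getVert_mem_support P.reverse 1
      rwa [Walk.support_reverse, List.mem_reverse] at this
    have := ncard_le_of_two_mem (hprevne _ hmem2)
      (J.mem_neighborSet w2 _ |>.mpr (hz2 ▸ hadjprev).symm)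
      (J.mem_neighborSet w2 _ |>.mpr hadj2)
    rw [← degS] at this
    omega
  · -- z internal in P : three distinct neighbours
    obtain ⟨z1, z2, h12, ha1, ha2, hm1, hm2⟩ := internal_two_nbrs P hP hzmem hz1 hz2
    have := ncard_le_of_three_mem (hprevne _ hm1) (hprevne _ hm2) h12
      (J.mem_neighborSet z _ |>.mpr hadjprev.symm)
      (J.mem_neighborSet z _ |>.mpr ha1)
      (J.mem_neighborSet z _ |>.mpr ha2)
    rw [← degS] at this
    have := hdeg z
    omega

end PathSys

section StarAB
set_option linter.unusedSectionVars false
variable {V : Type*} [Fintype V] {J : SimpleGraph V}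

lemma starAB_nbrSet (hac : J.IsAcyclic) (hdeg : ∀ v, degS J v ≤ 2) {v : V}
    (hv : degS J v = 1) : ∃ w, w ≠ v ∧ degS J w = 1 ∧ J.Reachable v w ∧
      (starAB J).neighborSet v = {w} := by
  obtain ⟨u, hru, -, himp⟩ := exists_leaf hac v
  obtain ⟨hneq, hdu⟩ := himp hv
  refine ⟨u, hneq, hdu, hru, ?_⟩
  ext z
  simp only [mem_neighborSet, Set.mem_singleton_iff]
  constructor
  · rintro ⟨hnz, -, hdz, hrz⟩
    exact leaf_unique hac hdeg hv ⟨hnz.symm, hdz, hrz⟩ ⟨hneq, hdu, hru⟩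
  · rintro rfl
    exact ⟨hneq.symm, hv, hdu, hru⟩

lemma starAB_nbr_empty {v : V} (hv : degS J v ≠ 1) : (starAB J).neighborSet v = ∅ := by
  ext z
  simp only [mem_neighborSet, Set.mem_empty_iff_false, iff_false]
  rintro ⟨-, h1, -, -⟩
  exact hv h1

end StarAB

lemma cycOn_adj' {V : Type*} {N : ℕ} {f : ZMod N → V} {u v : V} :
    (cycOn f).Adj u v ↔ (∃ i : ZMod N, s(u, v) = s(f i, f (i + 1))) ∧ u ≠ v := by
  simp [cycOn, SimpleGraph.fromEdgeSet_adj, Set.mem_setOf_eq]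

section Ham
set_option linter.unusedSectionVars false
variable {V : Type*} [Fintype V]

open Classical in
noncomputable def nxtV (G : SimpleGraph V) (u v : V) : V :=
  if h : ((G.neighborSet v) \ {u}).Nonempty then h.choose else v

lemma nxtV_spec {G : SimpleGraph V} {u v : V}
    (hdeg : (G.neighborSet v).ncard = 2) (h : G.Adj v u) :
    G.Adj v (nxtV G u v) ∧ nxtV G u v ≠ u ∧ ∀ z, G.Adj v z → z ≠ u → z = nxtV G u v := by
  obtain ⟨a, b, hab, hset⟩ := Set.ncard_eq_two.mp hdeg
  have hu : u ∈ ({a, b} : Set V) := hset ▸ h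
  have key : ∃ w, G.neighborSet v \ {u} = {w} := by
    rcases hu with rfl | rfl
    · refine ⟨b, ?_⟩
      rw [hset]; ext t
      simp only [Set.mem_diff, Set.mem_insert_iff, Set.mem_singleton_iff]
      constructor
      · rintro ⟨h1 | h1, h2⟩; exact absurd h1 h2; exact h1
      · rintro rfl; exact ⟨Or.inr rfl, hab.symm⟩
    · refine ⟨a, ?_⟩
      rw [hset]; ext t
      simp only [Set.mem_diff, Set.mem_insert_iff, Set.mem_singleton_iff]
      constructor
      · rintro ⟨h1 | h1, h2⟩; exact h1; exact absurd h1 h2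
      · rintro rfl; exact ⟨Or.inl rfl, hab⟩
  obtain ⟨w, hw⟩ := key
  have hne : ((G.neighborSet v) \ {u}).Nonempty := by rw [hw]; exact ⟨w, rfl⟩
  have hmem : nxtV G u v ∈ G.neighborSet v \ {u} := by
    classical
    rw [nxtV]
    rw [dif_pos hne]
    exact hne.choose_spec
  have hval : nxtV G u v = w := by
    have := hmem; rw [hw] at this; exact this
  refine ⟨hmem.1, hmem.2, fun z hz hzu => ?_⟩
  have : z ∈ G.neighborSet v \ {u} := ⟨hz, hzu⟩
  rw [hw] at this
  rw [hval]; exact this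

noncomputable def hamSeq (G : SimpleGraph V) (v0 v1 : V) : ℕ → V × V
  | 0 => (v0, v1)
  | n + 1 => ((hamSeq G v0 v1 n).2, nxtV G (hamSeq G v0 v1 n).1 (hamSeq G v0 v1 n).2)

lemma ham_of_twoRegular (G : SimpleGraph V) [Nonempty V]
    (hdeg : ∀ v, (G.neighborSet v).ncard = 2) (hconn : G.Preconnected) :
    IsHamCycleOn G Set.univ := by
  classical
  obtain ⟨v0⟩ := ‹Nonempty V›
  have hne0 : (G.neighborSet v0).Nonempty := by
    rw [← Set.ncard_pos (Set.toFinite _), hdeg v0]; omega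
  obtain ⟨v1, hv1⟩ := hne0
  set g : ℕ → V := fun n => (hamSeq G v0 v1 n).1 with hgdef
  have hgsucc : ∀ n, g (n + 1) = (hamSeq G v0 v1 n).2 := fun n => rfl
  have hrec : ∀ n, g (n + 2) = nxtV G (g n) (g (n + 1)) := fun n => rfl
  have hadj : ∀ n, G.Adj (g n) (g (n + 1)) := by
    intro n
    induction n with
    | zero => exact hv1
    | succ m ih =>
      rw [hrec m]
      exact (nxtV_spec (hdeg _) ih.symm).1
  have hne2 : ∀ n, g (n + 2) ≠ g n := fun n => by
    rw [hrec n]; exact (nxtV_spec (hdeg _) (hadj n).symm).2.1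
  have hnbhd : ∀ n, G.neighborSet (g (n + 1)) = {g n, g (n + 2)} := by
    intro n
    ext z
    simp only [mem_neighborSet, Set.mem_insert_iff, Set.mem_singleton_iff]
    constructor
    · intro hz
      by_cases h : z = g n
      · exact Or.inl h
      · right
        rw [hrec n]
        exact (nxtV_spec (hdeg _) (hadj n).symm).2.2 z hz h
    · rintro (rfl | rfl)
      · exact (hadj n).symm
      · exact hadj (n + 1)
  have fwd : ∀ n m, g n = g m → g (n + 1) = g (m + 1) → g (n + 2) = g (m + 2) := by
    intro n m h1 h2; rw [hrec n, hrec m, h1, h2]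
  have bwd : ∀ n m, g (n + 1) = g (m + 1) → g (n + 2) = g (m + 2) → g n = g m := by
    intro n m h1 h2
    have e1 : ({g n, g (n + 2)} : Set V) = {g m, g (m + 2)} := by
      rw [← hnbhd n, ← hnbhd m, h1]
    have hmem : g n ∈ ({g m, g (m + 2)} : Set V) := by
      rw [← e1]; exact Set.mem_insert _ _
    rcases hmem with h | h
    · exact h
    · exfalso
      rw [Set.mem_singleton_iff, ← h2] at h
      exact hne2 n h.symm
  -- descending pairs
  have down : ∀ p q, p ≤ q → g p = g q → g (p + 1) = g (q + 1) →
      g 0 = g (q - p) ∧ g 1 = g (q - p + 1) := by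
    intro p q hpq h1 h2
    have main : ∀ k, k ≤ p → g (p - k) = g (q - k) ∧ g (p - k + 1) = g (q - k + 1) := by
      intro k
      induction k with
      | zero => intro _; simpa using ⟨h1, h2⟩
      | succ kk ih =>
        intro hk
        obtain ⟨ih1, ih2⟩ := ih (by omega)
        have e1 : p - (kk + 1) + 1 = p - kk := by omega
        have e2 : q - (kk + 1) + 1 = q - kk := by omega
        have e1' : p - (kk + 1) + 2 = p - kk + 1 := by omega
        have e2' : q - (kk + 1) + 2 = q - kk + 1 := by omega
        constructor
        · refine bwd _ _ ?_ ?_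
          · rw [e1, e2]; exact ih1
          · rw [e1', e2']; exact ih2
        · rw [e1, e2]; exact ih1
    have := main p (le_refl p)
    rw [Nat.sub_self] at this
    have e3 : q - p + 1 = q - p + 1 := rfl
    exact ⟨this.1.trans (by rfl), by
      have := this.2
      convert this using 2⟩
  -- existence of a period
  have hper : ∃ dd, 0 < dd ∧ g dd = g 0 ∧ g (dd + 1) = g 1 := by
    obtain ⟨m1, m2, hmne, hmeq⟩ := Finite.exists_ne_map_eq_of_infinite (fun n : ℕ => (g n, g (n + 1)))
    have h1 : g m1 = g m2 := congrArg Prod.fst hmeq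
    have h2 : g (m1 + 1) = g (m2 + 1) := congrArg Prod.snd hmeq
    rcases Ne.lt_or_gt hmne with h | h
    · obtain ⟨e0, e1⟩ := down m1 m2 (le_of_lt h) h1 h2
      exact ⟨m2 - m1, by omega, e0.symm, e1.symm⟩
    · obtain ⟨e0, e1⟩ := down m2 m1 (le_of_lt h) h1.symm h2.symm
      exact ⟨m1 - m2, by omega, e0.symm, e1.symm⟩
  set Nn := Nat.find hper with hNndef
  obtain ⟨hNpos, hN0, hN1⟩ : 0 < Nn ∧ g Nn = g 0 ∧ g (Nn + 1) = g 1 := Nat.find_spec hper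
  -- forward periodicity
  have per : ∀ n, g (n + Nn) = g n ∧ g (n + Nn + 1) = g (n + 1) := by
    intro n
    induction n with
    | zero => simpa using ⟨hN0, hN1⟩
    | succ m ih =>
      constructor
      · have : m + 1 + Nn = m + Nn + 1 := by omega
        rw [this]; exact ih.2
      · have e : m + 1 + Nn + 1 = (m + Nn) + 2 := by omega
        rw [e, show m + 1 + 1 = m + 2 by omega]
        exact fwd _ _ ih.1 ih.2
  have perg : ∀ n, g (n + Nn) = g n := fun n => (per n).1
  have hN3 : 3 ≤ Nn := by
    rcases (by omega : Nn = 1 ∨ Nn = 2 ∨ 3 ≤ Nn) with h | h | h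
    · exact absurd (by simpa [h] using hN0 : g (0 + 1) = g 0) (hadj 0).ne'
    · exact absurd (by simpa [h] using hN0 : g (0 + 2) = g 0) (hne2 0)
    · exact h
  have hmul : ∀ q r, g (q * Nn + r) = g r := by
    intro q r
    induction q with
    | zero => simp
    | succ t ih =>
      have e : (t + 1) * Nn + r = (t * Nn + r) + Nn := by ring
      rw [e, perg, ih]
  have hgmod : ∀ m : ℕ, g (m % Nn) = g m := by
    intro m
    conv_rhs => rw [← Nat.div_add_mod m Nn, Nat.mul_comm]
    exact (hmul (m / Nn) (m % Nn)).symm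
  have inj' : ∀ i j, i < j → j - i < Nn → g (i + 1) ≠ g (j + 1) := by
    intro i j hij hlt heq
    have hsets : ({g i, g (i + 2)} : Set V) = {g j, g (j + 2)} := by
      rw [← hnbhd i, ← hnbhd j, heq]
    rcases Set.pair_eq_pair_iff.mp hsets with ⟨e1, e2⟩ | ⟨e1, e2⟩
    · obtain ⟨d0, d1⟩ := down i j (by omega) e1 heq
      exact absurd ⟨by omega, d0.symm, d1.symm⟩ (Nat.find_min hper (by omega))
    · -- fold case
      have fold : ∀ k, i + 1 + k ≤ j + 1 - k → g (i + 1 + k) = g (j + 1 - k) := by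
        intro k
        induction k using Nat.strong_induction_on with
        | _ k ihk =>
          match k, ihk with
          | 0, _ => intro _; simpa using heq
          | 1, _ => intro _
                    rw [show j + 1 - 1 = j by omega, show i + 1 + 1 = i + 2 by omega]
                    exact e2
          | (k+2), ihk =>
            intro hk
            have hjk : k + 2 ≤ j - i - 1 := by omega
            have ek := ihk k (by omega) (by omega)
            have ek1 := ihk (k+1) (by omega) (by omega)
            rw [show j + 1 - (k + 1) = j - k by omega] at ek1
            -- neighborhood comparison at positions i+1+k+1 and j-k
            have hnb1 := hnbhd (i + 1 + k)
            have hnb2 := hnbhd (j - k - 1)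
            rw [show j - k - 1 + 1 = j - k by omega, show j - k - 1 + 2 = j + 1 - k by omega] at hnb2
            rw [show i + 1 + k + 1 = i + 1 + (k+1) by omega, ek1, hnb2] at hnb1
            rcases Set.pair_eq_pair_iff.mp hnb1 with ⟨f1, f2⟩ | ⟨f1, f2⟩
            · exfalso
              rw [← ek] at f2
              exact hne2 _ f2.symm
            · rw [show i + 1 + (k + 2) = i + 1 + k + 2 by omega,
                show j + 1 - (k + 2) = j - k - 1 by omega]
              exact f1.symm
      rcases Nat.even_or_odd (j - i) with ⟨c, hc⟩ | ⟨c, hc⟩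
      · have hc1 : 1 ≤ c := by omega
        have hf := fold (c - 1) (by omega)
        rw [show j + 1 - (c - 1) = (i + 1 + (c - 1)) + 2 by omega] at hf
        exact hne2 _ hf.symm
      · have hf := fold c (by omega)
        rw [show j + 1 - c = (i + 1 + c) + 1 by omega] at hf
        exact (hadj _).ne hf
  have hinjw : ∀ i j, i < Nn → j < Nn → g i = g j → i = j := by
    intro i j hi hj hgij
    by_contra hne
    have main : ∀ a b, a < b → b < Nn → g a = g b → False := by
      intro a b hab hbN heq
      rcases Nat.eq_zero_or_pos a with rfl | ha
      · have heq2 : g b = g Nn := heq.symm.trans hN0.symm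
        exact inj' (b - 1) (Nn - 1) (by omega) (by omega)
          (by rw [show b - 1 + 1 = b by omega, show Nn - 1 + 1 = Nn by omega]; exact heq2)
      · exact inj' (a - 1) (b - 1) (by omega) (by omega)
          (by rw [show a - 1 + 1 = a by omega, show b - 1 + 1 = b by omega]; exact heq)
    rcases Ne.lt_or_gt hne with h | h
    · exact main i j h hj hgij
    · exact main j i h hi hgij.symm
  haveI : NeZero Nn := ⟨by omega⟩
  set f : ZMod Nn → V := fun i => g i.val with hfdef
  have hfval : ∀ i : ZMod Nn, f i = g i.val := fun i => rfl
  have hfinj : Function.Injective f := by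
    intro a b hab
    have := hinjw a.val b.val (ZMod.val_lt a) (ZMod.val_lt b) hab
    rw [← ZMod.natCast_zmod_val a, ← ZMod.natCast_zmod_val b, this]
  have hfcast : ∀ m : ℕ, f (m : ZMod Nn) = g m := by
    intro m
    rw [hfval, ZMod.val_natCast]
    exact hgmod m
  have hfstep : ∀ i : ZMod Nn, f (i + 1) = g (i.val + 1) := by
    intro i
    have e : (i + 1 : ZMod Nn) = ((i.val + 1 : ℕ) : ZMod Nn) := by
      rw [Nat.cast_add, Nat.cast_one, ZMod.natCast_zmod_val]
    rw [e, hfcast]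
  have hfsub : ∀ i : ZMod Nn, f (i - 1) = g (i.val + (Nn - 1)) := by
    intro i
    have e : (i - 1 : ZMod Nn) = ((i.val + (Nn - 1) : ℕ) : ZMod Nn) := by
      rw [Nat.cast_add, ZMod.natCast_zmod_val, Nat.cast_sub (by omega : 1 ≤ Nn)]
      rw [ZMod.natCast_self]
      ring
    rw [e, hfcast]
  have hfadj : ∀ i : ZMod Nn, G.Adj (f i) (f (i + 1)) := by
    intro i; rw [hfstep, hfval]; exact hadj i.val
  have hNf : ∀ i : ZMod Nn, G.neighborSet (f i) = {f (i - 1), f (i + 1)} := by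
    intro i
    have e0 : f i = g (i.val + (Nn - 1) + 1) := by
      rw [show i.val + (Nn - 1) + 1 = i.val + Nn by omega, perg, hfval]
    have e1 : f (i - 1) = g (i.val + (Nn - 1)) := hfsub i
    have e2 : f (i + 1) = g (i.val + (Nn - 1) + 2) := by
      rw [hfstep, show i.val + (Nn - 1) + 2 = (i.val + 1) + Nn by omega, perg]
    rw [e0, e1, e2, hnbhd]
  have hrange : Set.range f = Set.univ := by
    have hclosed : ∀ u, u ∈ Set.range f → ∀ w, G.Adj u w → w ∈ Set.range f := by
      rintro u ⟨i, rfl⟩ w hw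
      have hmem : w ∈ G.neighborSet (f i) := hw
      rw [hNf] at hmem
      rcases hmem with h' | h'
      · exact ⟨i - 1, h'.symm⟩
      · exact ⟨i + 1, (Set.mem_singleton_iff.mp h').symm⟩
    have hwalk : ∀ (u w : V) (p : G.Walk u w), w ∈ Set.range f → u ∈ Set.range f := by
      intro u w p
      induction p with
      | nil => exact id
      | cons h q ih => intro hw; exact hclosed _ (ih hw) _ h.symm
    ext w
    simp only [Set.mem_univ, iff_true]
    have hv0 : v0 ∈ Set.range f := ⟨0, by rw [hfval, ZMod.val_zero]; rfl⟩
    obtain ⟨p⟩ := hconn w v0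
    exact hwalk w v0 p hv0
  have hGeq : G = cycOn f := by
    ext u w
    constructor
    · intro h
      have hu : u ∈ Set.range f := by rw [hrange]; trivial
      obtain ⟨i, rfl⟩ := hu
      have hmem : w ∈ G.neighborSet (f i) := h
      rw [hNf] at hmem
      rcases hmem with h' | h'
      · subst h'
        exact cycOn_adj'.mpr ⟨⟨i - 1, by rw [sub_add_cancel]; exact Sym2.eq_swap⟩, h.ne⟩
      · rw [Set.mem_singleton_iff] at h'
        subst h'
        exact cycOn_adj'.mpr ⟨⟨i, rfl⟩, h.ne⟩
    · intro h
      obtain ⟨⟨i, hi⟩, hne⟩ := cycOn_adj'.mp h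
      rcases Sym2.eq_iff.mp hi with ⟨h1, h2⟩ | ⟨h1, h2⟩
      · rw [h1, h2]; exact hfadj i
      · rw [h1, h2]; exact (hfadj i).symm
  exact ⟨Nn, f, hN3, hfinj, hrange, hGeq⟩

end Ham

/-- Proposition 5.1(i): if `J` is a Hamilton exceptional system, `C_A` is a Hamilton cycle
on `A` consistent with `J*_A` and `C_B` is a Hamilton cycle on `B` consistent with `J*_B`,
then `C_A + C_B - J* + J` is a Hamilton cycle on `V`. -/
theorem stmt7 (V : Type*) [Fintype V] (A A₀ B B₀ : Set V) (J : SimpleGraph V)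
    (hpart : A ∪ A₀ ∪ B ∪ B₀ = Set.univ)
    (hd1 : Disjoint A A₀) (hd2 : Disjoint A B) (hd3 : Disjoint A B₀)
    (hd4 : Disjoint A₀ B) (hd5 : Disjoint A₀ B₀) (hd6 : Disjoint B B₀)
    (hps : PathSystem J)
    (hEC2a : ∀ v ∈ A₀ ∪ B₀, degS J v = 2)
    (hEC2b : ∀ v, v ∉ A₀ ∪ B₀ → degS J v ≤ 1)
    (hEC3 : ∀ x y, J.Adj x y → ¬(x ∈ A ∧ y ∈ A) ∧ ¬(x ∈ B ∧ y ∈ B))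
    -- enumeration of the `AB`-edges of `J*_{AB}`; there are `2ℓ > 0` of them, so `J` is a
    -- Hamilton exceptional system
    (ℓ : ℕ) (hℓ : 0 < ℓ)
    (x y : ZMod (2 * ℓ) → V)
    (hxinj : Function.Injective x) (hyinj : Function.Injective y)
    (hxA : ∀ i, x i ∈ A) (hyB : ∀ i, y i ∈ B)
    (henum : ∀ u v, ((starAB J).Adj u v ∧ u ∈ A ∧ v ∈ B) ↔ ∃ i, u = x i ∧ v = y i)
    -- the fictive edge graphs `J*_A`, `J*_B`
    (JA JB : SimpleGraph V)
    (hJA : JA = SimpleGraph.fromEdgeSet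
      ({e | ∃ u v, e = s(u, v) ∧ (starAB J).Adj u v ∧ u ∈ A ∧ v ∈ A} ∪
       {e | ∃ i : Fin ℓ, e = s(x ((2 * (i : ℕ) : ℕ) : ZMod (2 * ℓ)),
                               x (((2 * (i : ℕ) + 1 : ℕ)) : ZMod (2 * ℓ)))}))
    (hJB : JB = SimpleGraph.fromEdgeSet
      ({e | ∃ u v, e = s(u, v) ∧ (starAB J).Adj u v ∧ u ∈ B ∧ v ∈ B} ∪
       {e | ∃ i : Fin ℓ, e = s(y ((2 * (i : ℕ) + 1 : ℕ) : ZMod (2 * ℓ)),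
                               y ((2 * (i : ℕ) + 2 : ℕ) : ZMod (2 * ℓ)))}))
    -- the Hamilton cycles `C_A`, `C_B`
    (NA NB : ℕ) (fA : ZMod NA → V) (fB : ZMod NB → V)
    (hNA : 3 ≤ NA) (hNB : 3 ≤ NB)
    (hfAinj : Function.Injective fA) (hfBinj : Function.Injective fB)
    (hfA : Set.range fA = A) (hfB : Set.range fB = B)
    -- consistency of `C_A` with `J*_A` and of `C_B` with `J*_B`
    (hconsA : JA ≤ cycOn fA ∧
      VisitsInOrder fA (2 * ℓ) (fun j : ℕ => x ((j : ZMod (2 * ℓ)))))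
    (hconsB : JB ≤ cycOn fB ∧
      VisitsInOrder fB (2 * ℓ) (fun j : ℕ => y ((j : ZMod (2 * ℓ))))) :
    IsHamCycleOn (((cycOn fA ⊔ cycOn fB) \ (JA ⊔ JB)) ⊔ J) Set.univ := by
  classical
  obtain ⟨hac, hdeg2⟩ := hps
  haveI : NeZero NA := ⟨by omega⟩
  haveI : NeZero NB := ⟨by omega⟩
  haveI : NeZero (2 * ℓ) := ⟨by omega⟩
  -- membership helpers
  have hAnB : ∀ {v : V}, v ∈ A → v ∉ B := fun hv hb => Set.disjoint_left.mp hd2 hv hb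
  have hA0 : ∀ {v : V}, v ∈ A → v ∉ A₀ ∪ B₀ := by
    intro v hv hb
    rcases hb with h | h
    · exact Set.disjoint_left.mp hd1 hv h
    · exact Set.disjoint_left.mp hd3 hv h
  have hB0 : ∀ {v : V}, v ∈ B → v ∉ A₀ ∪ B₀ := by
    intro v hv hb
    rcases hb with h | h
    · exact Set.disjoint_left.mp hd4 h hv
    · exact Set.disjoint_left.mp hd6 hv h
  have hBnA : ∀ {v : V}, v ∈ B → v ∉ A := fun hv ha => hAnB ha hv
  -- star facts
  have hstar_xy : ∀ i, (starAB J).Adj (x i) (y i) := fun i =>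
    ((henum (x i) (y i)).mpr ⟨i, rfl, rfl⟩).1
  have hdegx : ∀ i, degS J (x i) = 1 := fun i => (hstar_xy i).2.1
  have hdegy : ∀ i, degS J (y i) = 1 := fun i => (hstar_xy i).2.2.1
  have hcastinj : ∀ a b : ℕ, a < 2 * ℓ → b < 2 * ℓ →
      ((a : ZMod (2*ℓ)) = (b : ZMod (2*ℓ))) → a = b := by
    intro a b ha hb h
    rw [← ZMod.val_natCast_of_lt ha, ← ZMod.val_natCast_of_lt hb, h]
  -- JA/JB adjacency characterisations
  have hJAadj : ∀ {u v : V}, JA.Adj u v ↔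
      ((∃ u' v', s(u,v) = s(u', v') ∧ (starAB J).Adj u' v' ∧ u' ∈ A ∧ v' ∈ A) ∨
       ∃ i : Fin ℓ, s(u,v) = s(x ((2 * (i:ℕ) : ℕ) : ZMod (2*ℓ)),
          x ((2 * (i:ℕ) + 1 : ℕ) : ZMod (2*ℓ)))) ∧ u ≠ v := by
    intro u v
    rw [hJA, SimpleGraph.fromEdgeSet_adj]
    simp only [Set.mem_union, Set.mem_setOf_eq]
  have hJBadj : ∀ {u v : V}, JB.Adj u v ↔
      ((∃ u' v', s(u,v) = s(u', v') ∧ (starAB J).Adj u' v' ∧ u' ∈ B ∧ v' ∈ B) ∨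
       ∃ i : Fin ℓ, s(u,v) = s(y ((2 * (i:ℕ) + 1 : ℕ) : ZMod (2*ℓ)),
          y ((2 * (i:ℕ) + 2 : ℕ) : ZMod (2*ℓ)))) ∧ u ≠ v := by
    intro u v
    rw [hJB, SimpleGraph.fromEdgeSet_adj]
    simp only [Set.mem_union, Set.mem_setOf_eq]
  have hJAA : ∀ {u v : V}, JA.Adj u v → u ∈ A := by
    intro u v h
    rcases (hJAadj.mp h).1 with ⟨u', v', hs, hadj', hu', hv'⟩ | ⟨i, hs⟩
    · rcases Sym2.eq_iff.mp hs with ⟨rfl, -⟩ | ⟨rfl, -⟩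
      exacts [hu', hv']
    · rcases Sym2.eq_iff.mp hs with ⟨h1, -⟩ | ⟨h1, -⟩ <;> rw [h1] <;> exact hxA _
  have hJBB : ∀ {u v : V}, JB.Adj u v → u ∈ B := by
    intro u v h
    rcases (hJBadj.mp h).1 with ⟨u', v', hs, hadj', hu', hv'⟩ | ⟨i, hs⟩
    · rcases Sym2.eq_iff.mp hs with ⟨rfl, -⟩ | ⟨rfl, -⟩
      exacts [hu', hv']
    · rcases Sym2.eq_iff.mp hs with ⟨h1, -⟩ | ⟨h1, -⟩ <;> rw [h1] <;> exact hyB _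
  -- neighbourhood formula for the big graph
  have hNG : ∀ v, (((cycOn fA ⊔ cycOn fB) \ (JA ⊔ JB)) ⊔ J).neighborSet v =
      (((cycOn fA).neighborSet v ∪ (cycOn fB).neighborSet v) \
        (JA.neighborSet v ∪ JB.neighborSet v)) ∪ J.neighborSet v := by
    intro v
    ext w
    simp only [mem_neighborSet, sup_adj, sdiff_adj, Set.mem_union, Set.mem_diff,
      mem_neighborSet]
  -- unique starAB neighbour
  have hstarnbr : ∀ {v : V}, degS J v = 1 → ∃ w, w ≠ v ∧ degS J w = 1 ∧ J.Reachable v w ∧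
      ∀ z, ((starAB J).Adj v z ↔ z = w) := by
    intro v hv
    obtain ⟨w, h1, h2, h3, h4⟩ := starAB_nbrSet hac hdeg2 hv
    refine ⟨w, h1, h2, h3, fun z => ?_⟩
    constructor
    · intro hz
      have : z ∈ (starAB J).neighborSet v := hz
      rwa [h4, Set.mem_singleton_iff] at this
    · intro hz
      have hmem : z ∈ (starAB J).neighborSet v := by
        rw [h4, Set.mem_singleton_iff]; exact hz
      exact hmem
  -- degree of vertices in A
  have hdegA : ∀ v ∈ A,
      ((((cycOn fA ⊔ cycOn fB) \ (JA ⊔ JB)) ⊔ J).neighborSet v).ncard = 2 := by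
    intro v hvA
    rw [hNG]
    have hCB0 : (cycOn fB).neighborSet v = ∅ := cycOn_nbr_empty (by rw [hfB]; exact hAnB hvA)
    have hJB0 : JB.neighborSet v = ∅ := by
      ext w
      simp only [mem_neighborSet, Set.mem_empty_iff_false, iff_false]
      intro h
      exact hAnB hvA (hJBB h)
    rw [hCB0, hJB0, Set.union_empty, Set.union_empty]
    have hsub : JA.neighborSet v ⊆ (cycOn fA).neighborSet v := fun w hw => hconsA.1 hw
    have hdisj : Disjoint ((cycOn fA).neighborSet v \ JA.neighborSet v) (J.neighborSet v) := by
      rw [Set.disjoint_left]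
      rintro w ⟨hw1, -⟩ hw2
      have hwA : w ∈ A := by
        rw [← hfA]
        exact cycOn_adj_mem_range (hw1 : (cycOn fA).Adj v w).symm
      exact (hEC3 v w hw2).1 ⟨hvA, hwA⟩
    rw [Set.ncard_union_eq hdisj (Set.toFinite _) (Set.toFinite _),
      Set.ncard_diff hsub (Set.toFinite _)]
    have hCA2 : ((cycOn fA).neighborSet v).ncard = 2 := by
      have hv' : v ∈ Set.range fA := by rw [hfA]; exact hvA
      obtain ⟨k, rfl⟩ := hv'
      exact cycOn_nbr_ncard hfAinj hNA k
    have hdegv : degS J v ≤ 1 := hEC2b v (hA0 hvA)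
    have hJcount : (JA.neighborSet v).ncard = degS J v := by
      rcases Nat.lt_or_ge (degS J v) 1 with h0 | h1
      · have h0' : degS J v = 0 := by omega
        have hempty : JA.neighborSet v = ∅ := by
          ext w
          simp only [mem_neighborSet, Set.mem_empty_iff_false, iff_false]
          intro hw
          rcases (hJAadj.mp hw).1 with ⟨u', v', hs, hadj', -, -⟩ | ⟨i, hs⟩
          · rcases Sym2.eq_iff.mp hs with ⟨rfl, -⟩ | ⟨rfl, -⟩
            · exact absurd hadj'.2.1 (by omega)
            · exact absurd hadj'.2.2.1 (by omega)
          · rcases Sym2.eq_iff.mp hs with ⟨h1, -⟩ | ⟨h1, -⟩ <;>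
              exact absurd (by rw [h1]; exact hdegx _ : degS J v = 1) (by omega)
        rw [hempty, Set.ncard_empty, h0']
      · have h1' : degS J v = 1 := by omega
        obtain ⟨w₀, hw0ne, hw0deg, hw0r, hw0iff⟩ := hstarnbr h1'
        by_cases hw0A : w₀ ∈ A
        · have hset : JA.neighborSet v = {w₀} := by
            ext w
            simp only [mem_neighborSet, Set.mem_singleton_iff]
            constructor
            · intro hw
              rcases (hJAadj.mp hw).1 with ⟨u', v', hs, hadj', hu', hv'⟩ | ⟨i, hs⟩
              · rcases Sym2.eq_iff.mp hs with ⟨h1, h2⟩ | ⟨h1, h2⟩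
                · exact (hw0iff w).mp (by rw [h1, h2]; exact hadj')
                · exact (hw0iff w).mp (by rw [h1, h2]; exact hadj'.symm)
              · exfalso
                rcases Sym2.eq_iff.mp hs with ⟨h1, -⟩ | ⟨h1, -⟩ <;>
                · have hyw : y _ = w₀ := (hw0iff (y _)).mp (by rw [h1]; exact hstar_xy _)
                  exact hAnB hw0A (by rw [← hyw]; exact hyB _)
            · intro hw
              rw [hw]
              exact hJAadj.mpr ⟨Or.inl ⟨v, w₀, rfl, (hw0iff w₀).mpr rfl, hvA, hw0A⟩, hw0ne.symm⟩
          rw [hset, Set.ncard_singleton, h1']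
        · have hw0B : w₀ ∈ B := by
            have hmem : w₀ ∈ A ∪ A₀ ∪ B ∪ B₀ := by rw [hpart]; trivial
            rcases hmem with ((h|h)|h)|h
            · exact absurd h hw0A
            · exact absurd (hEC2a w₀ (Or.inl h)) (by omega)
            · exact h
            · exact absurd (hEC2a w₀ (Or.inr h)) (by omega)
          obtain ⟨i, hvx, hwy⟩ := (henum v w₀).mp ⟨(hw0iff w₀).mpr rfl, hvA, hw0B⟩
          subst hvx
          subst hwy
          have hk : i.val < 2 * ℓ := ZMod.val_lt i
          have hik : ((i.val : ℕ) : ZMod (2*ℓ)) = i := ZMod.natCast_zmod_val i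
          -- helper to identify indices from x-equalities
          have hxid : ∀ a : ℕ, a < 2*ℓ → x i = x ((a : ℕ) : ZMod (2*ℓ)) → i.val = a := by
            intro a ha he
            have := hxinj he
            rw [← hik] at this
            exact hcastinj _ _ hk ha this
          rcases Nat.even_or_odd i.val with ⟨c, hc⟩ | ⟨c, hc⟩
          · -- i.val = 2c : partner is x (2c+1)
            have hcl : c < ℓ := by omega
            have hvx2 : x i = x ((2*c : ℕ) : ZMod (2*ℓ)) := by
              rw [← hik, show i.val = 2*c by omega]
            have hset : JA.neighborSet (x i) = {x ((2*c+1 : ℕ) : ZMod (2*ℓ))} := by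
              ext w
              simp only [mem_neighborSet, Set.mem_singleton_iff]
              constructor
              · intro hw
                rcases (hJAadj.mp hw).1 with ⟨u', v', hs, hadj', hu', hv'⟩ | ⟨j, hs⟩
                · exfalso
                  have hwA : w ∈ A := by
                    rcases Sym2.eq_iff.mp hs with ⟨-, h2⟩ | ⟨-, h2⟩ <;> rw [h2]
                    exacts [hv', hu']
                  have hadjvw : (starAB J).Adj (x i) w := by
                    rcases Sym2.eq_iff.mp hs with ⟨h1, h2⟩ | ⟨h1, h2⟩
                    · rw [h1, h2]; exact hadj'
                    · rw [h1, h2]; exact hadj'.symm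
                  have := (hw0iff w).mp hadjvw
                  exact hAnB hwA (this ▸ hw0B)
                · rcases Sym2.eq_iff.mp hs with ⟨h1, h2⟩ | ⟨h1, h2⟩
                  · have := hxid _ (by omega) h1
                    have hjc : (j : ℕ) = c := by omega
                    rw [h2, hjc]
                  · exfalso
                    have := hxid _ (by omega) h1
                    omega
              · rintro rfl
                refine hJAadj.mpr ⟨Or.inr ⟨⟨c, hcl⟩, ?_⟩, ?_⟩
                · rw [hvx2]
                · rw [hvx2]
                  intro he
                  have := hcastinj _ _ (by omega) (by omega) (hxinj he)
                  omega
            rw [hset, Set.ncard_singleton, h1']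
          · -- i.val = 2c+1 : partner is x (2c)
            have hcl : c < ℓ := by omega
            have hvx2 : x i = x ((2*c+1 : ℕ) : ZMod (2*ℓ)) := by
              rw [← hik, show i.val = 2*c+1 by omega]
            have hset : JA.neighborSet (x i) = {x ((2*c : ℕ) : ZMod (2*ℓ))} := by
              ext w
              simp only [mem_neighborSet, Set.mem_singleton_iff]
              constructor
              · intro hw
                rcases (hJAadj.mp hw).1 with ⟨u', v', hs, hadj', hu', hv'⟩ | ⟨j, hs⟩
                · exfalso
                  have hwA : w ∈ A := by
                    rcases Sym2.eq_iff.mp hs with ⟨-, h2⟩ | ⟨-, h2⟩ <;> rw [h2]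
                    exacts [hv', hu']
                  have hadjvw : (starAB J).Adj (x i) w := by
                    rcases Sym2.eq_iff.mp hs with ⟨h1, h2⟩ | ⟨h1, h2⟩
                    · rw [h1, h2]; exact hadj'
                    · rw [h1, h2]; exact hadj'.symm
                  have := (hw0iff w).mp hadjvw
                  exact hAnB hwA (this ▸ hw0B)
                · rcases Sym2.eq_iff.mp hs with ⟨h1, h2⟩ | ⟨h1, h2⟩
                  · exfalso
                    have := hxid _ (by omega) h1
                    omega
                  · have := hxid _ (by omega) h1
                    have hjc : (j : ℕ) = c := by omega
                    rw [h2, hjc]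
              · rintro rfl
                refine hJAadj.mpr ⟨Or.inr ⟨⟨c, hcl⟩, ?_⟩, ?_⟩
                · rw [hvx2, Sym2.eq_swap]
                · rw [hvx2]
                  intro he
                  have := hcastinj _ _ (by omega) (by omega) (hxinj he)
                  omega
            rw [hset, Set.ncard_singleton, h1']
    rw [hCA2, hJcount]
    have : (J.neighborSet v).ncard = degS J v := rfl
    rw [this]
    omega
  -- casting helper for indices that may reach 2*ℓ
  have hcast2l : ∀ b : ℕ, b ≤ 2*ℓ → ∃ b', b' < 2*ℓ ∧ ((b : ZMod (2*ℓ)) = (b' : ZMod (2*ℓ))) ∧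
      (b' = b ∨ (b = 2*ℓ ∧ b' = 0)) := by
    intro b hb
    rcases eq_or_lt_of_le hb with rfl | hlt
    · refine ⟨0, by omega, ?_, Or.inr ⟨rfl, rfl⟩⟩
      rw [Nat.cast_zero, ZMod.natCast_self]
    · exact ⟨b, hlt, rfl, Or.inl rfl⟩
  -- degree of vertices in B
  have hdegB : ∀ v ∈ B,
      ((((cycOn fA ⊔ cycOn fB) \ (JA ⊔ JB)) ⊔ J).neighborSet v).ncard = 2 := by
    intro v hvB
    rw [hNG]
    have hCA0 : (cycOn fA).neighborSet v = ∅ := cycOn_nbr_empty (by rw [hfA]; exact hBnA hvB)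
    have hJA0 : JA.neighborSet v = ∅ := by
      ext w
      simp only [mem_neighborSet, Set.mem_empty_iff_false, iff_false]
      intro h
      exact hBnA hvB (hJAA h)
    rw [hCA0, hJA0, Set.empty_union, Set.empty_union]
    have hsub : JB.neighborSet v ⊆ (cycOn fB).neighborSet v := fun w hw => hconsB.1 hw
    have hdisj : Disjoint ((cycOn fB).neighborSet v \ JB.neighborSet v) (J.neighborSet v) := by
      rw [Set.disjoint_left]
      rintro w ⟨hw1, -⟩ hw2
      have hwB : w ∈ B := by
        rw [← hfB]
        exact cycOn_adj_mem_range (hw1 : (cycOn fB).Adj v w).symm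
      exact (hEC3 v w hw2).2 ⟨hvB, hwB⟩
    rw [Set.ncard_union_eq hdisj (Set.toFinite _) (Set.toFinite _),
      Set.ncard_diff hsub (Set.toFinite _)]
    have hCB2 : ((cycOn fB).neighborSet v).ncard = 2 := by
      have hv' : v ∈ Set.range fB := by rw [hfB]; exact hvB
      obtain ⟨k, rfl⟩ := hv'
      exact cycOn_nbr_ncard hfBinj hNB k
    have hdegv : degS J v ≤ 1 := hEC2b v (hB0 hvB)
    have hJcount : (JB.neighborSet v).ncard = degS J v := by
      rcases Nat.lt_or_ge (degS J v) 1 with h0 | h1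
      · have h0' : degS J v = 0 := by omega
        have hempty : JB.neighborSet v = ∅ := by
          ext w
          simp only [mem_neighborSet, Set.mem_empty_iff_false, iff_false]
          intro hw
          rcases (hJBadj.mp hw).1 with ⟨u', v', hs, hadj', -, -⟩ | ⟨i, hs⟩
          · rcases Sym2.eq_iff.mp hs with ⟨rfl, -⟩ | ⟨rfl, -⟩
            · exact absurd hadj'.2.1 (by omega)
            · exact absurd hadj'.2.2.1 (by omega)
          · rcases Sym2.eq_iff.mp hs with ⟨h1, -⟩ | ⟨h1, -⟩ <;>
              exact absurd (by rw [h1]; exact hdegy _ : degS J v = 1) (by omega)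
        rw [hempty, Set.ncard_empty, h0']
      · have h1' : degS J v = 1 := by omega
        obtain ⟨w₀, hw0ne, hw0deg, hw0r, hw0iff⟩ := hstarnbr h1'
        by_cases hw0B : w₀ ∈ B
        · have hset : JB.neighborSet v = {w₀} := by
            ext w
            simp only [mem_neighborSet, Set.mem_singleton_iff]
            constructor
            · intro hw
              rcases (hJBadj.mp hw).1 with ⟨u', v', hs, hadj', hu', hv'⟩ | ⟨i, hs⟩
              · rcases Sym2.eq_iff.mp hs with ⟨h1, h2⟩ | ⟨h1, h2⟩
                · exact (hw0iff w).mp (by rw [h1, h2]; exact hadj')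
                · exact (hw0iff w).mp (by rw [h1, h2]; exact hadj'.symm)
              · exfalso
                rcases Sym2.eq_iff.mp hs with ⟨h1, -⟩ | ⟨h1, -⟩ <;>
                · have hxw : x _ = w₀ := (hw0iff (x _)).mp (by rw [h1]; exact (hstar_xy _).symm)
                  exact hBnA hw0B (by rw [← hxw]; exact hxA _)
            · intro hw
              rw [hw]
              exact hJBadj.mpr ⟨Or.inl ⟨v, w₀, rfl, (hw0iff w₀).mpr rfl, hvB, hw0B⟩, hw0ne.symm⟩
          rw [hset, Set.ncard_singleton, h1']
        · have hw0A : w₀ ∈ A := by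
            have hmem : w₀ ∈ A ∪ A₀ ∪ B ∪ B₀ := by rw [hpart]; trivial
            rcases hmem with ((h|h)|h)|h
            · exact h
            · exact absurd (hEC2a w₀ (Or.inl h)) (by omega)
            · exact absurd h hw0B
            · exact absurd (hEC2a w₀ (Or.inr h)) (by omega)
          obtain ⟨i, hwx, hvy⟩ := (henum w₀ v).mp ⟨((hw0iff w₀).mpr rfl).symm, hw0A, hvB⟩
          subst hwx
          subst hvy
          have hk : i.val < 2 * ℓ := ZMod.val_lt i
          have hik : ((i.val : ℕ) : ZMod (2*ℓ)) = i := ZMod.natCast_zmod_val i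
          have hyid : ∀ a : ℕ, a < 2*ℓ → y i = y ((a : ℕ) : ZMod (2*ℓ)) → i.val = a := by
            intro a ha he
            have := hyinj he
            rw [← hik] at this
            exact hcastinj _ _ hk ha this
          -- the S1 case is impossible
          have hS1 : ∀ w, (∃ u' v', s(y i, w) = s(u', v') ∧ (starAB J).Adj u' v' ∧
              u' ∈ B ∧ v' ∈ B) → False := by
            rintro w ⟨u', v', hs, hadj', hu', hv'⟩
            have hwB : w ∈ B := by
              rcases Sym2.eq_iff.mp hs with ⟨-, h2⟩ | ⟨-, h2⟩ <;> rw [h2]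
              exacts [hv', hu']
            have hadjvw : (starAB J).Adj (y i) w := by
              rcases Sym2.eq_iff.mp hs with ⟨h1, h2⟩ | ⟨h1, h2⟩
              · rw [h1, h2]; exact hadj'
              · rw [h1, h2]; exact hadj'.symm
            have := (hw0iff w).mp hadjvw
            exact hBnA hwB (this ▸ hw0A)
          -- analysis of fictive membership
          have hfievent : ∀ w (j : Fin ℓ),
              s(y i, w) = s(y ((2 * (j:ℕ) + 1 : ℕ) : ZMod (2*ℓ)), y ((2 * (j:ℕ) + 2 : ℕ) : ZMod (2*ℓ))) →
              (i.val = 2*(j:ℕ)+1 ∧ w = y ((2*(j:ℕ)+2 : ℕ) : ZMod (2*ℓ))) ∨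
              ((i.val = 2*(j:ℕ)+2 ∨ (i.val = 0 ∧ 2*(j:ℕ)+2 = 2*ℓ)) ∧
                w = y ((2*(j:ℕ)+1 : ℕ) : ZMod (2*ℓ))) := by
            intro w j hs
            rcases Sym2.eq_iff.mp hs with ⟨h1, h2⟩ | ⟨h1, h2⟩
            · exact Or.inl ⟨hyid _ (by omega) h1, h2⟩
            · right
              refine ⟨?_, h2⟩
              obtain ⟨b', hb1, hb2, hb3⟩ := hcast2l (2*(j:ℕ)+2) (by omega)
              rw [hb2] at h1
              have := hyid _ hb1 h1
              rcases hb3 with rfl | ⟨hbb, rfl⟩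
              · exact Or.inl this
              · exact Or.inr ⟨this, hbb⟩
          rcases Nat.even_or_odd i.val with ⟨c, hc⟩ | ⟨c, hc⟩
          · -- i.val even : two subcases
            rcases Nat.eq_zero_or_pos i.val with hzero | hpos
            · -- i.val = 0 : partner is y (2(ℓ-1)+1)
              have hvy2 : y i = y ((2*(ℓ-1)+2 : ℕ) : ZMod (2*ℓ)) := by
                congr 1
                rw [← hik, hzero, show 2*(ℓ-1)+2 = 2*ℓ by omega]
                rw [Nat.cast_zero, ZMod.natCast_self]
              have hset : JB.neighborSet (y i) = {y ((2*(ℓ-1)+1 : ℕ) : ZMod (2*ℓ))} := by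
                ext w
                simp only [mem_neighborSet, Set.mem_singleton_iff]
                constructor
                · intro hw
                  rcases (hJBadj.mp hw).1 with hS | ⟨j, hs⟩
                  · exact absurd hS (hS1 w)
                  · rcases hfievent w j hs with ⟨hji, hwv⟩ | ⟨hji, hwv⟩
                    · omega
                    · rcases hji with hji | ⟨-, hji⟩
                      · omega
                      · have hjl : (j:ℕ) = ℓ - 1 := by omega
                        rw [hwv, hjl]
                · intro hw
                  rw [hw]
                  refine hJBadj.mpr ⟨Or.inr ⟨⟨ℓ-1, by omega⟩, ?_⟩, ?_⟩
                  · rw [hvy2]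
                    rw [show ((⟨ℓ-1, by omega⟩ : Fin ℓ) : ℕ) = ℓ - 1 from rfl]
                    exact Sym2.eq_swap
                  · rw [hvy2]
                    intro he
                    have h1 := hyinj he
                    obtain ⟨b', hb1, hb2, hb3⟩ := hcast2l (2*(ℓ-1)+2) (by omega)
                    rw [hb2] at h1
                    have := hcastinj _ _ hb1 (by omega) h1
                    omega
              rw [hset, Set.ncard_singleton, h1']
            · -- i.val = 2c, c ≥ 1 : i.val = 2(c-1)+2, partner y (2(c-1)+1)
              have hcl : c - 1 < ℓ := by omega
              have hvy2 : y i = y ((2*(c-1)+2 : ℕ) : ZMod (2*ℓ)) := by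
                rw [← hik, show i.val = 2*(c-1)+2 by omega]
              have hset : JB.neighborSet (y i) = {y ((2*(c-1)+1 : ℕ) : ZMod (2*ℓ))} := by
                ext w
                simp only [mem_neighborSet, Set.mem_singleton_iff]
                constructor
                · intro hw
                  rcases (hJBadj.mp hw).1 with hS | ⟨j, hs⟩
                  · exact absurd hS (hS1 w)
                  · rcases hfievent w j hs with ⟨hji, hwv⟩ | ⟨hji, hwv⟩
                    · omega
                    · rcases hji with hji | ⟨hji, -⟩
                      · have hjl : (j:ℕ) = c - 1 := by omega
                        rw [hwv, hjl]
                      · omega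
                · intro hw
                  rw [hw]
                  refine hJBadj.mpr ⟨Or.inr ⟨⟨c-1, hcl⟩, ?_⟩, ?_⟩
                  · rw [hvy2]
                    rw [show ((⟨c-1, hcl⟩ : Fin ℓ) : ℕ) = c - 1 from rfl]
                    exact Sym2.eq_swap
                  · rw [hvy2]
                    intro he
                    have h1 := hyinj he
                    have := hcastinj _ _ (by omega) (by omega) h1
                    omega
              rw [hset, Set.ncard_singleton, h1']
          · -- i.val = 2c+1 : partner is y (2c+2)
            have hcl : c < ℓ := by omega
            have hvy2 : y i = y ((2*c+1 : ℕ) : ZMod (2*ℓ)) := by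
              rw [← hik, show i.val = 2*c+1 by omega]
            have hset : JB.neighborSet (y i) = {y ((2*c+2 : ℕ) : ZMod (2*ℓ))} := by
              ext w
              simp only [mem_neighborSet, Set.mem_singleton_iff]
              constructor
              · intro hw
                rcases (hJBadj.mp hw).1 with hS | ⟨j, hs⟩
                · exact absurd hS (hS1 w)
                · rcases hfievent w j hs with ⟨hji, hwv⟩ | ⟨hji, hwv⟩
                  · have hjl : (j:ℕ) = c := by omega
                    rw [hwv, hjl]
                  · rcases hji with hji | ⟨hji, -⟩ <;> omega
              · intro hw
                rw [hw]
                refine hJBadj.mpr ⟨Or.inr ⟨⟨c, hcl⟩, ?_⟩, ?_⟩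
                · rw [hvy2]
                · rw [hvy2]
                  intro he
                  have h1 := hyinj he
                  obtain ⟨b', hb1, hb2, hb3⟩ := hcast2l (2*c+2) (by omega)
                  rw [hb2] at h1
                  have := hcastinj _ _ (by omega) hb1 h1
                  omega
            rw [hset, Set.ncard_singleton, h1']
    rw [hCB2, hJcount]
    have : (J.neighborSet v).ncard = degS J v := rfl
    rw [this]
    omega
  -- degree of exceptional vertices
  have hdeg0 : ∀ v ∈ A₀ ∪ B₀,
      ((((cycOn fA ⊔ cycOn fB) \ (JA ⊔ JB)) ⊔ J).neighborSet v).ncard = 2 := by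
    intro v hv
    rw [hNG]
    have hvA : v ∉ A := fun h => hA0 h hv
    have hvB : v ∉ B := fun h => hB0 h hv
    have e1 : (cycOn fA).neighborSet v = ∅ := cycOn_nbr_empty (by rw [hfA]; exact hvA)
    have e2 : (cycOn fB).neighborSet v = ∅ := cycOn_nbr_empty (by rw [hfB]; exact hvB)
    have e3 : JA.neighborSet v = ∅ := by
      ext w
      simp only [mem_neighborSet, Set.mem_empty_iff_false, iff_false]
      intro h
      exact hvA (hJAA h)
    have e4 : JB.neighborSet v = ∅ := by
      ext w
      simp only [mem_neighborSet, Set.mem_empty_iff_false, iff_false]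
      intro h
      exact hvB (hJBB h)
    rw [e1, e2, e3, e4]
    simp only [Set.union_empty, Set.empty_diff, Set.empty_union]
    exact hEC2a v hv
  -- all degrees are 2
  have hdegG : ∀ v,
      ((((cycOn fA ⊔ cycOn fB) \ (JA ⊔ JB)) ⊔ J).neighborSet v).ncard = 2 := by
    intro v
    have hmem : v ∈ A ∪ A₀ ∪ B ∪ B₀ := by rw [hpart]; trivial
    rcases hmem with ((h|h)|h)|h
    · exact hdegA v h
    · exact hdeg0 v (Or.inl h)
    · exact hdegB v h
    · exact hdeg0 v (Or.inr h)
  -- ===== connectivity =====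
  obtain ⟨hJAle, hvisA'⟩ := hconsA
  obtain ⟨hJBle, hvisB'⟩ := hconsB
  obtain ⟨iA, oA, hmonoA, hvisA⟩ := hvisA'
  obtain ⟨iB, oB, hmonoB, hvisB⟩ := hvisB'
  have hmA : ∀ a b : ℕ, a < 2*ℓ → b < 2*ℓ → a < b → oA a < oA b := fun a b ha hb h =>
    hmonoA (Set.mem_Iio.mpr ha) (Set.mem_Iio.mpr hb) h
  have hmB : ∀ a b : ℕ, a < 2*ℓ → b < 2*ℓ → a < b → oB a < oB b := fun a b ha hb h =>
    hmonoB (Set.mem_Iio.mpr ha) (Set.mem_Iio.mpr hb) h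
  -- step lemmas
  have hstepA : ∀ k : ZMod NA, (∀ c : ℕ, c < ℓ →
      s(fA k, fA (k+1)) ≠ s(x ((2*c : ℕ) : ZMod (2*ℓ)), x ((2*c+1 : ℕ) : ZMod (2*ℓ)))) →
      (((cycOn fA ⊔ cycOn fB) \ (JA ⊔ JB)) ⊔ J).Reachable (fA k) (fA (k+1)) := by
    intro k hnf
    have hne : fA k ≠ fA (k+1) := by
      intro h
      have h2 := hfAinj h
      have h3 : (0 : ZMod NA) = 1 := by
        have h4 : k + 0 = k + 1 := by rw [add_zero]; exact h2
        exact add_left_cancel h4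
      exact one_ne_zero_zmod hNA h3.symm
    have hcy : (cycOn fA).Adj (fA k) (fA (k+1)) := cycOn_adj.mpr ⟨⟨k, rfl⟩, hne⟩
    by_cases hja : JA.Adj (fA k) (fA (k+1))
    · rcases (hJAadj.mp hja).1 with ⟨u', v', hs, hadj', -, -⟩ | ⟨i, hs⟩
      · have hr : J.Reachable (fA k) (fA (k+1)) := by
          rcases Sym2.eq_iff.mp hs with ⟨h1, h2⟩ | ⟨h1, h2⟩
          · rw [h1, h2]; exact hadj'.2.2.2
          · rw [h1, h2]; exact hadj'.2.2.2.symm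
        exact hr.mono le_sup_right
      · exact absurd hs (hnf (i : ℕ) i.2)
    · have hjb : ¬JB.Adj (fA k) (fA (k+1)) := fun h =>
        hAnB (by rw [← hfA]; exact ⟨k, rfl⟩) (hJBB h)
      refine SimpleGraph.Adj.reachable ?_
      simp only [sup_adj, sdiff_adj]
      refine Or.inl ⟨Or.inl hcy, fun h => ?_⟩
      rcases h with h | h
      exacts [hja h, hjb h]
  have hstepB : ∀ k : ZMod NB, (∀ c : ℕ, c < ℓ →
      s(fB k, fB (k+1)) ≠ s(y ((2*c+1 : ℕ) : ZMod (2*ℓ)), y ((2*c+2 : ℕ) : ZMod (2*ℓ)))) →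
      (((cycOn fA ⊔ cycOn fB) \ (JA ⊔ JB)) ⊔ J).Reachable (fB k) (fB (k+1)) := by
    intro k hnf
    have hne : fB k ≠ fB (k+1) := by
      intro h
      have h2 := hfBinj h
      have h3 : (0 : ZMod NB) = 1 := by
        have h4 : k + 0 = k + 1 := by rw [add_zero]; exact h2
        exact add_left_cancel h4
      exact one_ne_zero_zmod hNB h3.symm
    have hcy : (cycOn fB).Adj (fB k) (fB (k+1)) := cycOn_adj.mpr ⟨⟨k, rfl⟩, hne⟩
    by_cases hjb : JB.Adj (fB k) (fB (k+1))
    · rcases (hJBadj.mp hjb).1 with ⟨u', v', hs, hadj', -, -⟩ | ⟨i, hs⟩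
      · have hr : J.Reachable (fB k) (fB (k+1)) := by
          rcases Sym2.eq_iff.mp hs with ⟨h1, h2⟩ | ⟨h1, h2⟩
          · rw [h1, h2]; exact hadj'.2.2.2
          · rw [h1, h2]; exact hadj'.2.2.2.symm
        exact hr.mono le_sup_right
      · exact absurd hs (hnf (i : ℕ) i.2)
    · have hja : ¬JA.Adj (fB k) (fB (k+1)) := fun h =>
        hBnA (by rw [← hfB]; exact ⟨k, rfl⟩) (hJAA h)
      refine SimpleGraph.Adj.reachable ?_
      simp only [sup_adj, sdiff_adj]
      refine Or.inl ⟨Or.inr hcy, fun h => ?_⟩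
      rcases h with h | h
      exacts [hja h, hjb h]
  -- walkers
  have hwalkA : ∀ (k : ZMod NA) (t : ℕ),
      (∀ s : ℕ, s < t → ∀ c : ℕ, c < ℓ →
        s(fA (k + s), fA (k + s + 1)) ≠ s(x ((2*c : ℕ) : ZMod (2*ℓ)), x ((2*c+1 : ℕ) : ZMod (2*ℓ)))) →
      (((cycOn fA ⊔ cycOn fB) \ (JA ⊔ JB)) ⊔ J).Reachable (fA k) (fA (k + (t : ℕ))) := by
    intro k t
    induction t with
    | zero =>
      intro _
      rw [Nat.cast_zero, add_zero]
    | succ s ih =>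
      intro hs
      have h1 := ih (fun r hr => hs r (by omega))
      have h2 := hstepA (k + (s:ℕ)) (fun c hc he => hs s (by omega) c hc he)
      have e : k + ((s+1 : ℕ) : ZMod NA) = k + (s:ℕ) + 1 := by push_cast; ring
      rw [e]
      exact h1.trans h2
  have hwalkB : ∀ (k : ZMod NB) (t : ℕ),
      (∀ s : ℕ, s < t → ∀ c : ℕ, c < ℓ →
        s(fB (k + s), fB (k + s + 1)) ≠ s(y ((2*c+1 : ℕ) : ZMod (2*ℓ)), y ((2*c+2 : ℕ) : ZMod (2*ℓ)))) →
      (((cycOn fA ⊔ cycOn fB) \ (JA ⊔ JB)) ⊔ J).Reachable (fB k) (fB (k + (t : ℕ))) := by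
    intro k t
    induction t with
    | zero =>
      intro _
      rw [Nat.cast_zero, add_zero]
    | succ s ih =>
      intro hs
      have h1 := ih (fun r hr => hs r (by omega))
      have h2 := hstepB (k + (s:ℕ)) (fun c hc he => hs s (by omega) c hc he)
      have e : k + ((s+1 : ℕ) : ZMod NB) = k + (s:ℕ) + 1 := by push_cast; ring
      rw [e]
      exact h1.trans h2
  -- position identification
  have hposA : ∀ (q n : ℕ), q < NA → n < 2*ℓ →
      fA (iA + (q : ℕ)) = x ((n : ℕ) : ZMod (2*ℓ)) → q = oA n := by
    intro q n hq hn he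
    have h2 := (hvisA n hn).2
    have h3 := hfAinj (he.trans h2.symm)
    have h4 : ((q : ℕ) : ZMod NA) = ((oA n : ℕ) : ZMod NA) := add_left_cancel h3
    have h5 := congrArg ZMod.val h4
    rwa [ZMod.val_natCast_of_lt hq, ZMod.val_natCast_of_lt (hvisA n hn).1] at h5
  have hposB : ∀ (q n : ℕ), q < NB → n < 2*ℓ →
      fB (iB + (q : ℕ)) = y ((n : ℕ) : ZMod (2*ℓ)) → q = oB n := by
    intro q n hq hn he
    have h2 := (hvisB n hn).2
    have h3 := hfBinj (he.trans h2.symm)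
    have h4 : ((q : ℕ) : ZMod NB) = ((oB n : ℕ) : ZMod NB) := add_left_cancel h3
    have h5 := congrArg ZMod.val h4
    rwa [ZMod.val_natCast_of_lt hq, ZMod.val_natCast_of_lt (hvisB n hn).1] at h5
  -- arcs
  have harcA : ∀ m : ℕ, m + 1 < 2*ℓ → m % 2 = 1 →
      (((cycOn fA ⊔ cycOn fB) \ (JA ⊔ JB)) ⊔ J).Reachable
        (x ((m : ℕ) : ZMod (2*ℓ))) (x ((m+1 : ℕ) : ZMod (2*ℓ))) := by
    intro m hm1 hmo
    have hmlt : m < 2*ℓ := by omega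
    have ha := hvisA m hmlt
    have hb := hvisA (m+1) hm1
    have hab : oA m < oA (m+1) := hmA m (m+1) hmlt hm1 (by omega)
    have key := hwalkA (iA + (oA m : ℕ)) (oA (m+1) - oA m) ?_
    · have e : ((oA m : ℕ) : ZMod NA) + ((oA (m+1) - oA m : ℕ) : ZMod NA)
          = ((oA (m+1) : ℕ) : ZMod NA) := by
        rw [← Nat.cast_add, show oA m + (oA (m+1) - oA m) = oA (m+1) by omega]
      rw [add_assoc, e, ha.2, hb.2] at key
      exact key
    · intro s hslt c hc he
      exfalso
      have eq1 : (iA + (oA m : ℕ)) + (s : ℕ) = iA + ((oA m + s : ℕ) : ZMod NA) := by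
        push_cast; ring
      have eq2 : (iA + (oA m : ℕ)) + (s : ℕ) + 1 = iA + ((oA m + s + 1 : ℕ) : ZMod NA) := by
        push_cast; ring
      rw [eq2, eq1] at he
      have hqb : oA m + s < oA (m+1) := by omega
      have hqN : oA m + s < NA := by have := (hvisA (m+1) hm1).1; omega
      rcases Sym2.eq_iff.mp he with ⟨h1, h2⟩ | ⟨h1, h2⟩
      · have hpos1 := hposA (oA m + s) (2*c) hqN (by omega) h1
        have hle1 : m ≤ 2*c := by
          by_contra hlt
          push_neg at hlt
          have := hmA (2*c) m (by omega) hmlt hlt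
          omega
        have hle2 : 2*c < m+1 := by
          by_contra hge
          push_neg at hge
          rcases eq_or_lt_of_le hge with heq | hlt
          · rw [← heq] at hpos1; omega
          · have := hmA (m+1) (2*c) hm1 (by omega) hlt
            omega
        omega
      · have hpos2 := hposA (oA m + s + 1) (2*c) (by omega) (by omega) h2
        have hgt1 : m < 2*c := by
          by_contra hle
          push_neg at hle
          rcases eq_or_lt_of_le hle with heq | hlt
          · rw [← heq] at hpos2; omega
          · have := hmA (2*c) m (by omega) hmlt hlt
            omega
        have hle3 : 2*c ≤ m+1 := by
          by_contra hgt
          push_neg at hgt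
          have := hmA (m+1) (2*c) hm1 (by omega) (by omega)
          omega
        have hceq : 2*c = m+1 := by omega
        have hpos1 := hposA (oA m + s) (2*c+1) hqN (by omega) h1
        have := hmA (m+1) (2*c+1) hm1 (by omega) (by omega)
        omega
  have harcB : 2 ≤ ℓ → ∀ m : ℕ, m + 1 < 2*ℓ → m % 2 = 0 →
      (((cycOn fA ⊔ cycOn fB) \ (JA ⊔ JB)) ⊔ J).Reachable
        (y ((m : ℕ) : ZMod (2*ℓ))) (y ((m+1 : ℕ) : ZMod (2*ℓ))) := by
    intro hl2 m hm1 hme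
    have hmlt : m < 2*ℓ := by omega
    have ha := hvisB m hmlt
    have hb := hvisB (m+1) hm1
    have hab : oB m < oB (m+1) := hmB m (m+1) hmlt hm1 (by omega)
    have key := hwalkB (iB + (oB m : ℕ)) (oB (m+1) - oB m) ?_
    · have e : ((oB m : ℕ) : ZMod NB) + ((oB (m+1) - oB m : ℕ) : ZMod NB)
          = ((oB (m+1) : ℕ) : ZMod NB) := by
        rw [← Nat.cast_add, show oB m + (oB (m+1) - oB m) = oB (m+1) by omega]
      rw [add_assoc, e, ha.2, hb.2] at key
      exact key
    · intro s hslt c hc he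
      exfalso
      have eq1 : (iB + (oB m : ℕ)) + (s : ℕ) = iB + ((oB m + s : ℕ) : ZMod NB) := by
        push_cast; ring
      have eq2 : (iB + (oB m : ℕ)) + (s : ℕ) + 1 = iB + ((oB m + s + 1 : ℕ) : ZMod NB) := by
        push_cast; ring
      rw [eq2, eq1] at he
      have hqb : oB m + s < oB (m+1) := by omega
      have hqN : oB m + s < NB := by have := (hvisB (m+1) hm1).1; omega
      rcases Sym2.eq_iff.mp he with ⟨h1, h2⟩ | ⟨h1, h2⟩
      · have hpos1 := hposB (oB m + s) (2*c+1) hqN (by omega) h1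
        have hle1 : m ≤ 2*c+1 := by
          by_contra hlt
          push_neg at hlt
          have := hmB (2*c+1) m (by omega) hmlt hlt
          omega
        have hle2 : 2*c+1 < m+1 := by
          by_contra hge
          push_neg at hge
          rcases eq_or_lt_of_le hge with heq | hlt
          · rw [← heq] at hpos1; omega
          · have := hmB (m+1) (2*c+1) hm1 (by omega) hlt
            omega
        omega
      · have hpos2 := hposB (oB m + s + 1) (2*c+1) (by omega) (by omega) h2
        have hgt1 : m < 2*c+1 := by
          by_contra hle
          push_neg at hle
          rcases eq_or_lt_of_le hle with heq | hlt
          · rw [← heq] at hpos2; omega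
          · have := hmB (2*c+1) m (by omega) hmlt hlt
            omega
        have hle3 : 2*c+1 ≤ m+1 := by
          by_contra hgt
          push_neg at hgt
          have := hmB (m+1) (2*c+1) hm1 (by omega) (by omega)
          omega
        have hceq : 2*c+1 = m+1 := by omega
        obtain ⟨b', hb1, hb2, hb3⟩ := hcast2l (2*c+2) (by omega)
        rw [hb2] at h1
        have hpos3 := hposB (oB m + s) b' hqN hb1 h1
        rcases hb3 with rfl | ⟨hbb, rfl⟩
        · have := hmB (m+1) (2*c+2) hm1 hb1 (by omega)
          omega
        · have hm0 : m = 0 := by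
            by_contra hm'
            have := hmB 0 m (by omega) hmlt (by omega)
            omega
          omega
  -- the special case ℓ = 1
  have hspec : ℓ = 1 →
      (((cycOn fA ⊔ cycOn fB) \ (JA ⊔ JB)) ⊔ J).Reachable
        (y ((0 : ℕ) : ZMod (2*ℓ))) (y ((1 : ℕ) : ZMod (2*ℓ))) := by
    intro hl1
    have hy20 : y ((2*0+2 : ℕ) : ZMod (2*ℓ)) = y ((0 : ℕ) : ZMod (2*ℓ)) := by
      congr 1
      rw [show (2*0+2 : ℕ) = 2*ℓ by omega, ZMod.natCast_self, Nat.cast_zero]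
    have hyne : y ((2*0+1 : ℕ) : ZMod (2*ℓ)) ≠ y ((2*0+2 : ℕ) : ZMod (2*ℓ)) := by
      rw [hy20]
      intro he
      have := hcastinj _ _ (by omega) (by omega) (hyinj he)
      omega
    have hfict : JB.Adj (y ((2*0+1 : ℕ) : ZMod (2*ℓ))) (y ((2*0+2 : ℕ) : ZMod (2*ℓ))) :=
      hJBadj.mpr ⟨Or.inr ⟨⟨0, by omega⟩, rfl⟩, hyne⟩
    have hcyc := hJBle hfict
    obtain ⟨⟨k, hk⟩, -⟩ := cycOn_adj.mp hcyc
    have walk := hwalkB (k + 1) (NB - 1) ?_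
    · have e : ((NB - 1 : ℕ) : ZMod NB) = -1 := by
        rw [Nat.cast_sub (by omega : 1 ≤ NB), ZMod.natCast_self, Nat.cast_one]
        ring
      rw [e, show k + 1 + -1 = k from by ring] at walk
      -- identify endpoints
      rcases Sym2.eq_iff.mp hk with ⟨h1, h2⟩ | ⟨h1, h2⟩
      · rw [show (1 : ℕ) = 2*0+1 by omega, h1, ← hy20, h2]
        exact walk
      · rw [show (1 : ℕ) = 2*0+1 by omega, h1, ← hy20, h2]
        exact walk.symm
    · intro s hslt c hc he
      have hc0 : c = 0 := by omega
      subst hc0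
      rw [hk] at he
      have eq1 : k + 1 + (s : ℕ) = k + ((s+1 : ℕ) : ZMod NB) := by push_cast; ring
      have eq2 : k + 1 + (s : ℕ) + 1 = k + ((s+2 : ℕ) : ZMod NB) := by push_cast; ring
      rw [eq2, eq1] at he
      rcases Sym2.eq_iff.mp he with ⟨h1, h2⟩ | ⟨h1, h2⟩
      · -- fB (k + (s+1)) = fB k : s+1 ≡ 0, impossible since 0 < s+1 < NB
        have h3 := hfBinj (h1.trans (by rw [show (k : ZMod NB) = k + ((0:ℕ) : ZMod NB) from by push_cast; ring]))
        have h4 : ((s+1 : ℕ) : ZMod NB) = ((0:ℕ) : ZMod NB) := add_left_cancel h3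
        have h5 := congrArg ZMod.val h4
        rw [ZMod.val_natCast_of_lt (by omega), ZMod.val_natCast_of_lt (by omega)] at h5
        omega
      · -- fB (k + (s+1)) = fB (k+1) : s ≡ 0, so s = 0; then fB (k+2) = fB k
        have h3 := hfBinj (h1.trans (by rw [show k + 1 = k + ((1:ℕ) : ZMod NB) from by push_cast; ring]))
        have h4 : ((s+1 : ℕ) : ZMod NB) = ((1:ℕ) : ZMod NB) := add_left_cancel h3
        have h5 := congrArg ZMod.val h4
        rw [ZMod.val_natCast_of_lt (by omega), ZMod.val_natCast_of_lt (by omega)] at h5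
        have hs0 : s = 0 := by omega
        subst hs0
        have h6 := hfBinj (h2.trans (by rw [show (k : ZMod NB) = k + ((0:ℕ) : ZMod NB) from by push_cast; ring]))
        have h7 : ((0+2 : ℕ) : ZMod NB) = ((0:ℕ) : ZMod NB) := add_left_cancel h6
        have h8 := congrArg ZMod.val h7
        rw [ZMod.val_natCast_of_lt (by omega), ZMod.val_natCast_of_lt (by omega)] at h8
        omega
  -- x j reachable to y j
  have hxyreach : ∀ j : ZMod (2*ℓ),
      (((cycOn fA ⊔ cycOn fB) \ (JA ⊔ JB)) ⊔ J).Reachable (x j) (y j) := fun j =>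
    ((hstar_xy j).2.2.2).mono le_sup_right
  -- chain : every y m reaches y 0
  have hchain : ∀ m : ℕ, m < 2*ℓ →
      (((cycOn fA ⊔ cycOn fB) \ (JA ⊔ JB)) ⊔ J).Reachable
        (y ((m : ℕ) : ZMod (2*ℓ))) (y ((0 : ℕ) : ZMod (2*ℓ))) := by
    intro m
    induction m using Nat.strong_induction_on with
    | _ m ih =>
      intro hm
      rcases Nat.eq_zero_or_pos m with rfl | hpos
      · exact Reachable.refl _
      rcases eq_or_lt_of_le (Nat.succ_le_of_lt hℓ) with hl1 | hl2
      · have hm1 : m = 1 := by omega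
        subst hm1
        exact (hspec hl1.symm).symm
      · have hl2' : 2 ≤ ℓ := hl2
        rcases Nat.even_or_odd m with ⟨c, hc⟩ | ⟨c, hc⟩
        · have hm2 : 2 ≤ m := by omega
          have s1 := (hxyreach ((m : ℕ) : ZMod (2*ℓ))).symm
          have s2 := harcA (m-1) (by omega) (by omega)
          rw [show (m-1)+1 = m by omega] at s2
          have s3 := hxyreach (((m-1 : ℕ) : ℕ) : ZMod (2*ℓ))
          exact s1.trans (s2.symm.trans (s3.trans (ih (m-1) (by omega) (by omega))))
        · have s2 := harcB hl2' (m-1) (by omega) (by omega)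
          rw [show (m-1)+1 = m by omega] at s2
          exact s2.symm.trans (ih (m-1) (by omega) (by omega))
  -- every vertex of A reaches some x j
  have hreachX : ∀ v ∈ A, ∃ j : ZMod (2*ℓ),
      (((cycOn fA ⊔ cycOn fB) \ (JA ⊔ JB)) ⊔ J).Reachable v (x j) := by
    intro v hv
    have hv' : v ∈ Set.range fA := by rw [hfA]; exact hv
    obtain ⟨p, rfl⟩ := hv'
    have hex : ∃ t : ℕ, fA (p + (t : ℕ)) ∈ Set.range x := by
      have hx0 : x 0 ∈ Set.range fA := by rw [hfA]; exact hxA 0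
      obtain ⟨q, hq⟩ := hx0
      refine ⟨(q - p).val, ?_⟩
      rw [ZMod.natCast_zmod_val, show p + (q - p) = q from by ring, hq]
      exact ⟨0, rfl⟩
    have hspec' := Nat.find_spec hex
    obtain ⟨j, hj⟩ := hspec'
    refine ⟨j, ?_⟩
    rw [hj]
    refine hwalkA p (Nat.find hex) ?_
    intro s hslt c hc he
    have hmin := Nat.find_min hex hslt
    rcases Sym2.eq_iff.mp he with ⟨h1, -⟩ | ⟨h1, -⟩ <;> exact hmin ⟨_, h1.symm⟩
  have hreachY : ∀ v ∈ B, ∃ j : ZMod (2*ℓ),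
      (((cycOn fA ⊔ cycOn fB) \ (JA ⊔ JB)) ⊔ J).Reachable v (y j) := by
    intro v hv
    have hv' : v ∈ Set.range fB := by rw [hfB]; exact hv
    obtain ⟨p, rfl⟩ := hv'
    have hex : ∃ t : ℕ, fB (p + (t : ℕ)) ∈ Set.range y := by
      have hy0 : y 0 ∈ Set.range fB := by rw [hfB]; exact hyB 0
      obtain ⟨q, hq⟩ := hy0
      refine ⟨(q - p).val, ?_⟩
      rw [ZMod.natCast_zmod_val, show p + (q - p) = q from by ring, hq]
      exact ⟨0, rfl⟩
    have hspec' := Nat.find_spec hex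
    obtain ⟨j, hj⟩ := hspec'
    refine ⟨j, ?_⟩
    rw [hj]
    refine hwalkB p (Nat.find hex) ?_
    intro s hslt c hc he
    have hmin := Nat.find_min hex hslt
    rcases Sym2.eq_iff.mp he with ⟨h1, -⟩ | ⟨h1, -⟩ <;> exact hmin ⟨_, h1.symm⟩
  -- every vertex reaches y 0
  have hreach : ∀ v, (((cycOn fA ⊔ cycOn fB) \ (JA ⊔ JB)) ⊔ J).Reachable
      v (y ((0 : ℕ) : ZMod (2*ℓ))) := by
    have hyj : ∀ j : ZMod (2*ℓ), (((cycOn fA ⊔ cycOn fB) \ (JA ⊔ JB)) ⊔ J).Reachable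
        (y j) (y ((0 : ℕ) : ZMod (2*ℓ))) := by
      intro j
      have := hchain j.val (ZMod.val_lt j)
      rwa [ZMod.natCast_zmod_val] at this
    have hAB : ∀ v, v ∈ A ∪ B → (((cycOn fA ⊔ cycOn fB) \ (JA ⊔ JB)) ⊔ J).Reachable
        v (y ((0 : ℕ) : ZMod (2*ℓ))) := by
      intro v hv
      rcases hv with hv | hv
      · obtain ⟨j, hr⟩ := hreachX v hv
        exact hr.trans ((hxyreach j).trans (hyj j))
      · obtain ⟨j, hr⟩ := hreachY v hv
        exact hr.trans (hyj j)
    intro v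
    have hmem : v ∈ A ∪ A₀ ∪ B ∪ B₀ := by rw [hpart]; trivial
    rcases hmem with ((h|h)|h)|h
    · exact hAB v (Or.inl h)
    · obtain ⟨u, hru, hdu, -⟩ := exists_leaf hac v
      have huAB : u ∈ A ∪ B := by
        have humem : u ∈ A ∪ A₀ ∪ B ∪ B₀ := by rw [hpart]; trivial
        rcases humem with ((h'|h')|h')|h'
        · exact Or.inl h'
        · exact absurd (hEC2a u (Or.inl h')) (by omega)
        · exact Or.inr h'
        · exact absurd (hEC2a u (Or.inr h')) (by omega)
      exact (hru.mono le_sup_right).trans (hAB u huAB)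
    · exact hAB v (Or.inr h)
    · obtain ⟨u, hru, hdu, -⟩ := exists_leaf hac v
      have huAB : u ∈ A ∪ B := by
        have humem : u ∈ A ∪ A₀ ∪ B ∪ B₀ := by rw [hpart]; trivial
        rcases humem with ((h'|h')|h')|h'
        · exact Or.inl h'
        · exact absurd (hEC2a u (Or.inl h')) (by omega)
        · exact Or.inr h'
        · exact absurd (hEC2a u (Or.inr h')) (by omega)
      exact (hru.mono le_sup_right).trans (hAB u huAB)
  have hpre : (((cycOn fA ⊔ cycOn fB) \ (JA ⊔ JB)) ⊔ J).Preconnected := fun u v =>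
    (hreach u).trans (hreach v).symm
  haveI : Nonempty V := ⟨x 0⟩
  exact ham_of_twoRegular _ hdegG hpre
end
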